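/- arXiv:2308.08508 — 10 statements merged into one kernel-verified Lean document; each statement's English description precedes it below -/
import Mathlib

section
/- A complete Boolean algebra B is atomic if and only if every maximal chain in B is weakly atomic in its induced order; that is, B is atomic if and only if for every maximal chain C ⊆ B and all x, y ∈ C with x < y there exist a, b ∈ C with x ≤ a, b ≤ y, a < b, and no element of C strictly between a and b. -/
open Set

lemma maxChain_sSup_mem' {B : Type*} [CompleteLattice B] {C : Set B}
    (hC : IsMaxChain (· ≤ ·) C) {S : Set B} (hS : S ⊆ C) : sSup S ∈ C := by
  have hchain : IsChain (· ≤ ·) (insert (sSup S) C) := by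
    refine hC.1.insert fun c hc _ => ?_
    by_cases h : ∀ s ∈ S, s ≤ c
    · exact Or.inl (sSup_le h)
    · push_neg at h
      obtain ⟨s, hsS, hsc⟩ := h
      rcases hC.1.total hc (hS hsS) with h' | h'
      · exact Or.inr (h'.trans (le_sSup hsS))
      · exact absurd h' hsc
  have := hC.2 hchain (subset_insert _ _)
  rw [this]; exact mem_insert _ _

lemma maxChain_sInf_mem' {B : Type*} [CompleteLattice B] {C : Set B}
    (hC : IsMaxChain (· ≤ ·) C) {S : Set B} (hS : S ⊆ C) : sInf S ∈ C := by
  have hchain : IsChain (· ≤ ·) (insert (sInf S) C) := by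
    refine hC.1.insert fun c hc _ => ?_
    by_cases h : ∀ s ∈ S, c ≤ s
    · exact Or.inr (le_sInf h)
    · push_neg at h
      obtain ⟨s, hsS, hsc⟩ := h
      rcases hC.1.total hc (hS hsS) with h' | h'
      · exact absurd h' hsc
      · exact Or.inl ((sInf_le hsS).trans h')
  have := hC.2 hchain (subset_insert _ _)
  rw [this]; exact mem_insert _ _

/-- A complete Boolean algebra is atomic iff every maximal chain in it is
weakly atomic in its induced order. -/
theorem completeBooleanAlgebra_atomic_iff_maxChains_weaklyAtomic {B : Type*}
    [CompleteBooleanAlgebra B] :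
    (∀ x : B, x ≠ ⊥ → ∃ a : B, IsAtom a ∧ a ≤ x) ↔
      (∀ C : Set B, IsMaxChain (· ≤ ·) C →
        ∀ x ∈ C, ∀ y ∈ C, x < y →
          ∃ a ∈ C, ∃ b ∈ C, x ≤ a ∧ b ≤ y ∧ a < b ∧ ∀ c ∈ C, ¬ (a < c ∧ c < b)) := by
  constructor
  · intro hat C hC x hx y hy hxy
    obtain ⟨p, hp, hpyx⟩ := hat (y \ x) (fun hb => hxy.not_ge (sdiff_eq_bot_iff.mp hb))
    have hpy : p ≤ y := hpyx.trans sdiff_le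
    have hpx : ¬ p ≤ x := by
      intro h'
      have hpc : p ≤ xᶜ := hpyx.trans (by rw [_root_.sdiff_eq]; exact inf_le_right)
      exact hp.1 (le_bot_iff.mp (by simpa using le_inf h' hpc))
    -- the set A and a := sSup A
    set A : Set B := {c | c ∈ C ∧ x ≤ c ∧ c ≤ y ∧ ¬ p ≤ c} with hA
    have hAC : A ⊆ C := fun c hc => hc.1
    set a := sSup A with ha
    have haC : a ∈ C := maxChain_sSup_mem' hC hAC
    have hxA : x ∈ A := ⟨hx, le_rfl, hxy.le, hpx⟩
    have hxa : x ≤ a := le_sSup hxA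
    have hay : a ≤ y := sSup_le fun c hc => hc.2.2.1
    have hpa : ¬ p ≤ a := by
      intro hpa
      have h1 : p = p ⊓ sSup A := (inf_eq_left.mpr hpa).symm
      rw [inf_sSup_eq] at h1
      have h2 : ∀ c ∈ A, p ⊓ c = ⊥ := by
        intro c hc
        rcases lt_or_eq_of_le (inf_le_left : p ⊓ c ≤ p) with h | h
        · exact hp.2 _ h
        · exact absurd (h ▸ inf_le_right : p ≤ c) hc.2.2.2
      apply hp.1
      rw [h1]
      exact le_bot_iff.mp (iSup₂_le fun c hc => (h2 c hc).le)
    -- the set D and b := sInf D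
    set D : Set B := {c | c ∈ C ∧ c ≤ y ∧ p ≤ c} with hD
    have hDC : D ⊆ C := fun c hc => hc.1
    set b := sInf D with hb
    have hbC : b ∈ C := maxChain_sInf_mem' hC hDC
    have hyD : y ∈ D := ⟨hy, le_rfl, hpy⟩
    have hby : b ≤ y := sInf_le hyD
    have hpb : p ≤ b := le_sInf fun c hc => hc.2.2
    have hab : a ≤ b := by
      refine le_sInf fun c hc => ?_
      rcases hC.1.total haC hc.1 with h | h
      · exact h
      · exact absurd (hc.2.2.trans h) hpa
    have hab' : a < b := hab.lt_of_ne (fun h => hpa (h ▸ hpb))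
    refine ⟨a, haC, b, hbC, hxa, hby, hab', fun c hcC ⟨hac, hcb⟩ => ?_⟩
    by_cases hpc : p ≤ c
    · exact hcb.not_ge (sInf_le ⟨hcC, hcb.le.trans hby, hpc⟩)
    · exact hac.not_ge (le_sSup (⟨hcC, hxa.trans hac.le, hcb.le.trans hby, hpc⟩ : c ∈ A))
  · intro h x hx
    have hchain : IsChain (· ≤ ·) ({⊥, x} : Set B) := by
      intro u hu v hv _
      rcases hu with rfl | hu <;> rcases hv with rfl | hv <;>
        simp_all [bot_le, le_refl]
    obtain ⟨C, hC, hsub⟩ := hchain.exists_maxChain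
    have hbotC : (⊥ : B) ∈ C := hsub (by simp)
    have hxC : x ∈ C := hsub (by simp)
    obtain ⟨a, haC, b, hbC, -, hbx, hab, hcov⟩ :=
      h C hC ⊥ hbotC x hxC hx.bot_lt
    -- every element between a and b is a or b
    have hkey : ∀ e : B, a ≤ e → e ≤ b → e = a ∨ e = b := by
      intro e hae heb
      have hech : IsChain (· ≤ ·) (insert e C) := by
        refine hC.1.insert fun c hcC _ => ?_
        rcases hC.1.total hcC haC with h1 | h1
        · exact Or.inr (h1.trans hae)
        · rcases hC.1.total hcC hbC with h2 | h2
          · rcases h1.lt_or_eq with h1' | h1'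
            · rcases h2.lt_or_eq with h2' | h2'
              · exact absurd ⟨h1', h2'⟩ (hcov c hcC)
              · exact Or.inl (heb.trans h2'.ge)
            · exact Or.inr (h1'.symm ▸ hae)
          · exact Or.inl (heb.trans h2)
      have heC : e ∈ C := by
        have := hC.2 hech (subset_insert _ _)
        rw [this]; exact mem_insert _ _
      by_contra hne; push_neg at hne
      exact hcov e heC ⟨hae.lt_of_ne (Ne.symm hne.1), heb.lt_of_ne hne.2⟩
    -- d = b \ a is an atom below x
    refine ⟨b \ a, ⟨fun hd => hab.not_ge (sdiff_eq_bot_iff.mp hd), ?_⟩,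
      sdiff_le.trans hbx⟩
    intro e he
    by_contra hebot
    have heca : e ⊓ a = ⊥ := by
      have h1 : e ≤ aᶜ := he.le.trans (by rw [_root_.sdiff_eq]; exact inf_le_right)
      have h2 : e ⊓ a ≤ ⊥ := (inf_le_inf_right a h1).trans (by simp)
      exact le_bot_iff.mp h2
    have hsup : a ≤ a ⊔ e := le_sup_left
    have hsupb : a ⊔ e ≤ b := sup_le hab.le (he.le.trans sdiff_le)
    rcases hkey (a ⊔ e) hsup hsupb with h1 | h1
    · have : e ≤ a := le_sup_right.trans h1.le
      exact hebot (le_bot_iff.mp (le_inf (le_refl e) this |>.trans heca.le))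
    · have : b \ a = e := by
        rw [← h1, sup_comm, sup_sdiff_right_self, sdiff_eq_self_iff_disjoint]
        exact disjoint_iff.mpr (by rw [inf_comm]; exact heca)
      exact he.ne this.symm
end

section
/- Let L be a complete OML. If every maximal chain in L is weakly atomic in its induced order, then every complete subalgebra of L is atomic; i.e., for every subset S of L closed under the orthocomplementation and under arbitrary suprema and infima computed in L, every element of S other than ⊥ has an element of S that is an atom of the poset S below it. -/
/-- A complete orthomodular lattice: a complete lattice with an orthocomplementation
`x ↦ xᶜ` satisfying the orthomodular law. -/
class CompleteOML (α : Type*) extends CompleteLattice α, Compl α where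
  compl_compl : ∀ x : α, xᶜᶜ = x
  compl_antitone : ∀ x y : α, x ≤ y → yᶜ ≤ xᶜ
  inf_compl : ∀ x : α, x ⊓ xᶜ = ⊥
  sup_compl : ∀ x : α, x ⊔ xᶜ = ⊤
  orthomodular : ∀ x y : α, x ≤ y → x ⊔ (xᶜ ⊓ y) = y

/-- A complete subalgebra of a complete OML: a subset closed under the
orthocomplementation and under arbitrary suprema and infima computed in the ambient
lattice. -/
def CompleteSubalgebra {α : Type*} [CompleteLattice α] [Compl α] (S : Set α) : Prop :=
  (∀ x ∈ S, xᶜ ∈ S) ∧ (∀ T : Set α, T ⊆ S → sSup T ∈ S) ∧ (∀ T : Set α, T ⊆ S → sInf T ∈ S)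

/-- A subset `S` (viewed as a poset with least element `⊥`) is atomic: every member
other than `⊥` has below it a member of `S` that is an atom of the poset `S`. -/
def AtomicSubset {α : Type*} [CompleteLattice α] (S : Set α) : Prop :=
  ∀ x ∈ S, x ≠ ⊥ → ∃ a ∈ S, a ≠ ⊥ ∧ (∀ s ∈ S, ¬ (⊥ < s ∧ s < a)) ∧ a ≤ x

section Aux

variable {α : Type*} [CompleteOML α]

private lemma oml_compl_le {x y : α} (hxy : x ≤ y) : yᶜ ≤ xᶜ :=
  CompleteOML.compl_antitone x y hxy

private lemma oml_demorgan (a b : α) : (a ⊔ b)ᶜ = aᶜ ⊓ bᶜ := by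
  apply le_antisymm
  · exact le_inf (oml_compl_le le_sup_left) (oml_compl_le le_sup_right)
  · have h1 : a ≤ (aᶜ ⊓ bᶜ)ᶜ := by
      have := oml_compl_le (inf_le_left : aᶜ ⊓ bᶜ ≤ aᶜ)
      rwa [CompleteOML.compl_compl] at this
    have h2 : b ≤ (aᶜ ⊓ bᶜ)ᶜ := by
      have := oml_compl_le (inf_le_right : aᶜ ⊓ bᶜ ≤ bᶜ)
      rwa [CompleteOML.compl_compl] at this
    have h3 := oml_compl_le (sup_le h1 h2)
    rwa [CompleteOML.compl_compl] at h3

/-- In an OML, if `u ≤ sᶜ` then `sᶜ ⊓ (s ⊔ u) = u`. -/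
private lemma oml_sasaki {s u : α} (h : u ≤ sᶜ) : sᶜ ⊓ (s ⊔ u) = u := by
  have huv : u ≤ sᶜ ⊓ (s ⊔ u) := le_inf h le_sup_right
  have hom := CompleteOML.orthomodular u (sᶜ ⊓ (s ⊔ u)) huv
  have hz : uᶜ ⊓ (sᶜ ⊓ (s ⊔ u)) = ⊥ := by
    rw [← inf_assoc, inf_comm uᶜ sᶜ, ← oml_demorgan]
    have := CompleteOML.inf_compl ((s ⊔ u)ᶜ)
    rwa [CompleteOML.compl_compl] at this
  rw [hz, sup_bot_eq] at hom
  exact hom.symm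

end Aux

/-- in a complete OML, if every maximal chain is weakly atomic in its
induced order, then every complete subalgebra is atomic. -/
theorem completeSubalgebras_atomic_of_maxChains_weaklyAtomic {α : Type*} [CompleteOML α]
    (h : ∀ C : Set α, IsMaxChain (· ≤ ·) C →
      ∀ x ∈ C, ∀ y ∈ C, x < y →
        ∃ a ∈ C, ∃ b ∈ C, x ≤ a ∧ b ≤ y ∧ a < b ∧ ∀ c ∈ C, ¬ (a < c ∧ c < b)) :
    ∀ S : Set α, CompleteSubalgebra S → AtomicSubset S := by
  intro S hS x hxS hx
  obtain ⟨hcompl, hsup, hinf⟩ := hS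
  have hbotS : (⊥ : α) ∈ S := by
    have := hsup ∅ (by simp)
    simpa using this
  -- the poset `P = S ∩ [⊥, x]`
  set P : Set α := {v | v ∈ S ∧ v ≤ x} with hPdef
  -- a maximal chain `C₀` of `P` containing `⊥` and `x`
  have hZ : ∃ C₀, ({⊥, x} : Set α) ⊆ C₀ ∧
      Maximal (· ∈ {C : Set α | C ⊆ P ∧ IsChain (· ≤ ·) C}) C₀ := by
    apply zorn_subset_nonempty
    · intro c hc hchain _
      refine ⟨⋃₀ c, ⟨?_, ?_⟩, fun s hs => Set.subset_sUnion_of_mem hs⟩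
      · rintro y ⟨sy, hsy, hysy⟩
        exact (hc hsy).1 hysy
      · rintro y ⟨sy, hsy, hysy⟩ z ⟨sz, hsz, hzsz⟩ hyz
        rcases eq_or_ne sy sz with rfl | hne
        · exact (hc hsy).2 hysy hzsz hyz
        · rcases hchain hsy hsz hne with hsub | hsub
          · exact (hc hsz).2 (hsub hysy) hzsz hyz
          · exact (hc hsy).2 hysy (hsub hzsz) hyz
    · constructor
      · rintro y (rfl | rfl)
        · exact ⟨hbotS, bot_le⟩
        · exact ⟨hxS, le_rfl⟩
      · rintro y (rfl | rfl) z (rfl | rfl) hne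
        · exact absurd rfl hne
        · exact Or.inl bot_le
        · exact Or.inr bot_le
        · exact absurd rfl hne
  obtain ⟨C₀, hsub₀, hmax₀⟩ := hZ
  have hC₀P : C₀ ⊆ P := hmax₀.prop.1
  have hC₀chain : IsChain (· ≤ ·) C₀ := hmax₀.prop.2
  have hbotC₀ : (⊥ : α) ∈ C₀ := hsub₀ (Set.mem_insert _ _)
  have hxC₀ : x ∈ C₀ := hsub₀ (Set.mem_insert_of_mem _ rfl)
  -- extend to a maximal chain `C` of the whole lattice
  obtain ⟨C, hC, hC₀C⟩ := hC₀chain.exists_maxChain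
  -- apply weak atomicity of `C` to `⊥ < x`
  obtain ⟨a, haC, b, hbC, -, hbx, hab, hcov⟩ :=
    h C hC ⊥ (hC₀C hbotC₀) x (hC₀C hxC₀) (hx.bot_lt)
  -- project the covering pair to `S`
  set s : α := sSup {c | c ∈ C₀ ∧ c ≤ a} with hsdef
  set t : α := sInf {c | c ∈ C₀ ∧ b ≤ c} with htdef
  have hsS : s ∈ S := hsup _ (fun c hc => (hC₀P hc.1).1)
  have htS : t ∈ S := hinf _ (fun c hc => (hC₀P hc.1).1)
  have hsa : s ≤ a := sSup_le (fun c hc => hc.2)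
  have hbt : b ≤ t := le_sInf (fun c hc => hc.2)
  have htx : t ≤ x := sInf_le ⟨hxC₀, hbx⟩
  have hst : s < t := lt_of_le_of_lt hsa (lt_of_lt_of_le hab hbt)
  -- every element of `C₀` is below `s` or above `t`
  have key : ∀ c ∈ C₀, c ≤ s ∨ t ≤ c := by
    intro c hc
    rcases eq_or_ne c a with rfl | hca
    · exact Or.inl (le_sSup ⟨hc, le_rfl⟩)
    rcases hC.1 (hC₀C hc) haC hca with hle | hle
    · exact Or.inl (le_sSup ⟨hc, hle⟩)
    rcases eq_or_ne c b with rfl | hcb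
    · exact Or.inr (sInf_le ⟨hc, le_rfl⟩)
    rcases hC.1 (hC₀C hc) hbC hcb with hle' | hle'
    · exact absurd ⟨lt_of_le_of_ne hle (Ne.symm hca), lt_of_le_of_ne hle' hcb⟩
        (hcov c (hC₀C hc))
    · exact Or.inr (sInf_le ⟨hc, hle'⟩)
  -- `t` covers `s` in `S`
  have nobetween : ∀ u ∈ S, ¬ (s < u ∧ u < t) := by
    rintro u huS ⟨hsu, hut⟩
    have huP : u ∈ P := ⟨huS, hut.le.trans htx⟩
    have hchain : IsChain (· ≤ ·) (insert u C₀) := by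
      apply hC₀chain.insert
      intro c hc _
      rcases key c hc with hcs | htc
      · exact Or.inr (hcs.trans hsu.le)
      · exact Or.inl (hut.le.trans htc)
    have hins : insert u C₀ ∈ {C : Set α | C ⊆ P ∧ IsChain (· ≤ ·) C} := by
      refine ⟨?_, hchain⟩
      rintro y (rfl | hy)
      · exact huP
      · exact hC₀P hy
    have huC₀ : u ∈ C₀ :=
      (hmax₀.eq_of_le hins (Set.subset_insert _ _)).symm ▸ Set.mem_insert _ _
    rcases key u huC₀ with hus | htu
    · exact absurd hus (not_le_of_gt hsu)
    · exact absurd htu (not_le_of_gt hut)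
  -- the atom
  set p : α := sᶜ ⊓ t with hpdef
  have hom : s ⊔ p = t := CompleteOML.orthomodular s t hst.le
  have hpS : p ∈ S := by
    have : p = sInf {sᶜ, t} := by rw [sInf_pair]
    rw [this]
    apply hinf
    rintro y (rfl | rfl)
    · exact hcompl s hsS
    · exact htS
  have hpbot : p ≠ ⊥ := by
    intro hp
    rw [hp, sup_bot_eq] at hom
    exact hst.ne hom
  refine ⟨p, hpS, hpbot, ?_, inf_le_right.trans htx⟩
  rintro u huS ⟨hu0, hup⟩
  have hup' : u ≤ sᶜ := hup.le.trans inf_le_left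
  have hsuS : s ⊔ u ∈ S := by
    have : s ⊔ u = sSup {s, u} := by rw [sSup_pair]
    rw [this]
    apply hsup
    rintro y (rfl | rfl)
    · exact hsS
    · exact huS
  have h1 : s < s ⊔ u := by
    refine lt_of_le_of_ne le_sup_left (fun he => ?_)
    have hus : u ≤ s := sup_eq_left.mp he.symm
    have : u ≤ s ⊓ sᶜ := le_inf hus hup'
    rw [CompleteOML.inf_compl] at this
    exact hu0.ne' (le_bot_iff.mp this)
  have h2 : s ⊔ u < t := by
    refine lt_of_le_of_ne (sup_le hst.le (hup.le.trans inf_le_right)) (fun he => ?_)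
    have hsas : sᶜ ⊓ (s ⊔ u) = u := oml_sasaki hup'
    rw [he] at hsas
    exact hup.ne' hsas
  exact nobetween (s ⊔ u) hsuS ⟨h1, h2⟩
end

section
/- Let L be a complete OML. If every block of L is atomic, then every maximal chain in L is weakly atomic in its induced order. -/
/-- `x` and `y` commute: `x = (x ⊓ y) ⊔ (x ⊓ yᶜ)`. -/
def Commutes {α : Type*} [Lattice α] [Compl α] (x y : α) : Prop :=
  x = (x ⊓ y) ⊔ (x ⊓ yᶜ)

/-- A subset containing the bounds, closed under `⊓`, `⊔` and `ᶜ`, whose elements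
pairwise commute. -/
def IsCommSubalg {α : Type*} [Lattice α] [BoundedOrder α] [Compl α] (S : Set α) : Prop :=
  ⊥ ∈ S ∧ ⊤ ∈ S ∧ (∀ x ∈ S, ∀ y ∈ S, x ⊓ y ∈ S) ∧ (∀ x ∈ S, ∀ y ∈ S, x ⊔ y ∈ S) ∧
    (∀ x ∈ S, xᶜ ∈ S) ∧ ∀ x ∈ S, ∀ y ∈ S, Commutes x y

/-- A block: a maximal commuting subalgebra. -/
def IsBlock {α : Type*} [Lattice α] [BoundedOrder α] [Compl α] (S : Set α) : Prop :=
  IsCommSubalg S ∧ ∀ T : Set α, IsCommSubalg T → S ⊆ T → S = T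

section OMLLemmas

variable {α : Type*} [CompleteOML α]

private lemma occ (x : α) : xᶜᶜ = x := CompleteOML.compl_compl x

private lemma oanti {x y : α} (h : x ≤ y) : yᶜ ≤ xᶜ := CompleteOML.compl_antitone x y h

private lemma oswap {x y : α} (h : x ≤ yᶜ) : y ≤ xᶜ := by
  have := oanti h; rwa [occ] at this

private lemma oinf_compl (x : α) : x ⊓ xᶜ = ⊥ := CompleteOML.inf_compl x

private lemma ocompl_inj {x y : α} (h : xᶜ = yᶜ) : x = y := by
  rw [← occ x, h, occ]

private lemma ocompl_sup (x y : α) : (x ⊔ y)ᶜ = xᶜ ⊓ yᶜ := by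
  apply le_antisymm
  · exact le_inf (oanti le_sup_left) (oanti le_sup_right)
  · apply oswap
    exact sup_le (oswap inf_le_left) (oswap inf_le_right)

private lemma ocompl_inf (x y : α) : (x ⊓ y)ᶜ = xᶜ ⊔ yᶜ := by
  apply ocompl_inj
  rw [occ, ocompl_sup, occ, occ]

private lemma om {x y : α} (h : x ≤ y) : x ⊔ (xᶜ ⊓ y) = y :=
  CompleteOML.orthomodular x y h

private lemma dualOM {w x : α} (h : w ≤ xᶜ) : xᶜ ⊓ (x ⊔ w) = w := by
  have h1 : w ≤ xᶜ ⊓ (x ⊔ w) := le_inf h le_sup_right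
  have h2 := om h1
  have h3 : wᶜ ⊓ (xᶜ ⊓ (x ⊔ w)) = ⊥ := by
    rw [← inf_assoc, inf_comm wᶜ xᶜ, ← ocompl_sup, inf_comm]
    exact oinf_compl _
  rw [h3, sup_bot_eq] at h2
  exact h2.symm

private lemma dualOM' {d a : α} (h : d ≤ a) : a ⊓ (aᶜ ⊔ d) = d := by
  have h' : d ≤ aᶜᶜ := by rwa [occ]
  have := dualOM h'
  rwa [occ] at this

private lemma commutes_of_le {x y : α} (h : x ≤ y) : Commutes x y := by
  unfold Commutes
  rw [inf_eq_left.2 h]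
  exact (sup_eq_left.2 inf_le_left).symm

private lemma commutes_of_ge {x y : α} (h : y ≤ x) : Commutes x y := by
  unfold Commutes
  rw [inf_eq_right.2 h, inf_comm]
  exact (om h).symm

private lemma commutes_symm {a b : α} (hab : Commutes a b) : Commutes b a := by
  unfold Commutes at *
  have h : a ⊔ bᶜ = (a ⊓ b) ⊔ bᶜ := by
    conv_lhs => rw [hab]
    rw [sup_assoc, (sup_eq_right.2 inf_le_right : a ⊓ bᶜ ⊔ bᶜ = bᶜ)]
  have he : b = (a ⊓ b) ⊔ (aᶜ ⊓ b) := by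
    apply ocompl_inj
    rw [ocompl_sup, ocompl_inf, ocompl_inf, occ, h, ← ocompl_inf]
    exact (dualOM (oanti inf_le_right)).symm
  rw [inf_comm b a, inf_comm b aᶜ]
  exact he

private lemma commutes_compl_right {a b : α} (h : Commutes a b) : Commutes a bᶜ := by
  unfold Commutes at *
  rw [occ, sup_comm]
  exact h

private lemma commutes_compl_left {a b : α} (h : Commutes a b) : Commutes aᶜ b :=
  commutes_symm (commutes_compl_right (commutes_symm h))

private lemma fh {a b c : α} (hab : Commutes a b) (hac : Commutes a c) :
    a ⊓ (b ⊔ c) = (a ⊓ b) ⊔ (a ⊓ c) := by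
  set d := (a ⊓ b) ⊔ (a ⊓ c) with hd_def
  have hd : d ≤ a := sup_le inf_le_left inf_le_left
  have hb' : b ≤ d ⊔ aᶜ := by
    calc b = (b ⊓ a) ⊔ (b ⊓ aᶜ) := commutes_symm hab
    _ ≤ d ⊔ aᶜ := sup_le_sup (by rw [inf_comm]; exact le_sup_left) inf_le_right
  have hc' : c ≤ d ⊔ aᶜ := by
    calc c = (c ⊓ a) ⊔ (c ⊓ aᶜ) := commutes_symm hac
    _ ≤ d ⊔ aᶜ := sup_le_sup (by rw [inf_comm]; exact le_sup_right) inf_le_right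
  have h1 : a ⊓ (b ⊔ c) ≤ d := by
    calc a ⊓ (b ⊔ c) ≤ a ⊓ (d ⊔ aᶜ) := inf_le_inf_left a (sup_le hb' hc')
    _ = d := by rw [sup_comm d aᶜ]; exact dualOM' hd
  refine le_antisymm h1 (sup_le ?_ ?_)
  · exact le_inf inf_le_left (inf_le_right.trans le_sup_left)
  · exact le_inf inf_le_left (inf_le_right.trans le_sup_right)

private lemma commutes_sup_left {a b c : α} (hba : Commutes b a) (hca : Commutes c a) :
    Commutes (b ⊔ c) a := by
  have hab := commutes_symm hba
  have hac := commutes_symm hca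
  have h1 : (b ⊔ c) ⊓ a = (a ⊓ b) ⊔ (a ⊓ c) := by rw [inf_comm]; exact fh hab hac
  have h2 : (b ⊔ c) ⊓ aᶜ = (aᶜ ⊓ b) ⊔ (aᶜ ⊓ c) := by
    rw [inf_comm]; exact fh (commutes_compl_left hab) (commutes_compl_left hac)
  unfold Commutes
  rw [h1, h2, sup_sup_sup_comm]
  have hb' : (a ⊓ b) ⊔ (aᶜ ⊓ b) = b := by
    conv_rhs => rw [hba]
    rw [inf_comm b a, inf_comm b aᶜ]
  have hc' : (a ⊓ c) ⊔ (aᶜ ⊓ c) = c := by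
    conv_rhs => rw [hca]
    rw [inf_comm c a, inf_comm c aᶜ]
  rw [hb', hc']

private lemma commutes_inf_left {a b c : α} (hba : Commutes b a) (hca : Commutes c a) :
    Commutes (b ⊓ c) a := by
  have h := commutes_compl_left
    (commutes_sup_left (commutes_compl_left hba) (commutes_compl_left hca))
  rwa [ocompl_sup, occ, occ] at h

/-- the commutant -/
private def commutant (M : Set α) : Set α := {x | ∀ m ∈ M, Commutes x m}

private lemma exists_isCommSubalg_superset (M : Set α)
    (hM : ∀ x ∈ M, ∀ y ∈ M, Commutes x y) :
    ∃ S : Set α, IsCommSubalg S ∧ M ⊆ S := by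
  refine ⟨commutant M ∩ commutant (commutant M), ⟨?_, ?_, ?_, ?_, ?_, ?_⟩, ?_⟩
  · exact ⟨fun m _ => commutes_of_le bot_le, fun m _ => commutes_of_le bot_le⟩
  · exact ⟨fun m _ => commutes_of_ge le_top, fun m _ => commutes_of_ge le_top⟩
  · exact fun x hx y hy => ⟨fun m hm => commutes_inf_left (hx.1 m hm) (hy.1 m hm),
      fun m hm => commutes_inf_left (hx.2 m hm) (hy.2 m hm)⟩
  · exact fun x hx y hy => ⟨fun m hm => commutes_sup_left (hx.1 m hm) (hy.1 m hm),
      fun m hm => commutes_sup_left (hx.2 m hm) (hy.2 m hm)⟩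
  · exact fun x hx => ⟨fun m hm => commutes_compl_left (hx.1 m hm),
      fun m hm => commutes_compl_left (hx.2 m hm)⟩
  · exact fun x hx y hy => hx.2 y hy.1
  · exact fun m hm => ⟨fun m' hm' => hM m hm m' hm',
      fun x hx => commutes_symm (hx m hm)⟩

private lemma exists_block_superset (M : Set α)
    (hM : ∀ x ∈ M, ∀ y ∈ M, Commutes x y) :
    ∃ B : Set α, IsBlock B ∧ M ⊆ B := by
  obtain ⟨S, hS, hMS⟩ := exists_isCommSubalg_superset M hM
  have hub : ∀ c ⊆ {T : Set α | IsCommSubalg T}, IsChain (· ⊆ ·) c → c.Nonempty →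
      ∃ ub ∈ {T : Set α | IsCommSubalg T}, ∀ s ∈ c, s ⊆ ub := by
    rintro c hc hchain ⟨T₀, hT₀⟩
    refine ⟨⋃₀ c, ⟨?_, ?_, ?_, ?_, ?_, ?_⟩, fun s hs => Set.subset_sUnion_of_mem hs⟩
    · exact ⟨T₀, hT₀, (hc hT₀).1⟩
    · exact ⟨T₀, hT₀, (hc hT₀).2.1⟩
    · rintro x ⟨T₁, hT₁, hx⟩ y ⟨T₂, hT₂, hy⟩
      rcases hchain.total hT₁ hT₂ with h | h
      · exact ⟨T₂, hT₂, (hc hT₂).2.2.1 x (h hx) y hy⟩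
      · exact ⟨T₁, hT₁, (hc hT₁).2.2.1 x hx y (h hy)⟩
    · rintro x ⟨T₁, hT₁, hx⟩ y ⟨T₂, hT₂, hy⟩
      rcases hchain.total hT₁ hT₂ with h | h
      · exact ⟨T₂, hT₂, (hc hT₂).2.2.2.1 x (h hx) y hy⟩
      · exact ⟨T₁, hT₁, (hc hT₁).2.2.2.1 x hx y (h hy)⟩
    · rintro x ⟨T₁, hT₁, hx⟩
      exact ⟨T₁, hT₁, (hc hT₁).2.2.2.2.1 x hx⟩
    · rintro x ⟨T₁, hT₁, hx⟩ y ⟨T₂, hT₂, hy⟩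
      rcases hchain.total hT₁ hT₂ with h | h
      · exact (hc hT₂).2.2.2.2.2 x (h hx) y hy
      · exact (hc hT₁).2.2.2.2.2 x hx y (h hy)
  obtain ⟨B, hSB, hBmem, hBmax⟩ :=
    zorn_subset_nonempty {T : Set α | IsCommSubalg T} hub S hS
  exact ⟨B, ⟨hBmem, fun T hT hBT => le_antisymm hBT (hBmax hT hBT)⟩, hMS.trans hSB⟩

private lemma sSup_mem_maxChain {C : Set α} (hC : IsMaxChain (· ≤ ·) C)
    {D : Set α} (hD : D ⊆ C) : sSup D ∈ C := by
  have hch : IsChain (· ≤ ·) (insert (sSup D) C) := by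
    refine hC.1.insert fun c hc _ => ?_
    by_cases h : ∀ d ∈ D, d ≤ c
    · exact Or.inl (sSup_le h)
    · push_neg at h
      obtain ⟨d, hd, hdc⟩ := h
      rcases eq_or_ne d c with rfl | hne
      · exact absurd le_rfl hdc
      rcases hC.1 (hD hd) hc hne with h' | h'
      · exact absurd h' hdc
      · exact Or.inr (h'.trans (le_sSup hd))
  have := hC.2 hch (Set.subset_insert _ _)
  rw [this]
  exact Set.mem_insert _ _

private lemma sInf_mem_maxChain {C : Set α} (hC : IsMaxChain (· ≤ ·) C)
    {D : Set α} (hD : D ⊆ C) : sInf D ∈ C := by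
  have hch : IsChain (· ≤ ·) (insert (sInf D) C) := by
    refine hC.1.insert fun c hc _ => ?_
    by_cases h : ∀ d ∈ D, c ≤ d
    · exact Or.inr (le_sInf h)
    · push_neg at h
      obtain ⟨d, hd, hdc⟩ := h
      rcases eq_or_ne c d with rfl | hne
      · exact absurd le_rfl hdc
      rcases hC.1 hc (hD hd) hne with h' | h'
      · exact absurd h' hdc
      · exact Or.inl ((sInf_le hd).trans h')
  have := hC.2 hch (Set.subset_insert _ _)
  rw [this]
  exact Set.mem_insert _ _

end OMLLemmas

/-- in a complete OML, if every block is atomic then every maximal chain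
is weakly atomic in its induced order. -/
theorem maxChains_weaklyAtomic_of_blocks_atomic {α : Type*} [CompleteOML α]
    (hb : ∀ S : Set α, IsBlock S → AtomicSubset S) :
    ∀ C : Set α, IsMaxChain (· ≤ ·) C →
      ∀ x ∈ C, ∀ y ∈ C, x < y →
        ∃ a ∈ C, ∃ b ∈ C, x ≤ a ∧ b ≤ y ∧ a < b ∧ ∀ c ∈ C, ¬ (a < c ∧ c < b) := by
  intro C hC x hxC y hyC hxy
  have hcomm : ∀ u ∈ C, ∀ v ∈ C, Commutes u v := by
    intro u hu v hv
    rcases eq_or_ne u v with rfl | hne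
    · exact commutes_of_le le_rfl
    rcases hC.1 hu hv hne with h | h
    · exact commutes_of_le h
    · exact commutes_of_ge h
  obtain ⟨B, hB, hCB⟩ := exists_block_superset C hcomm
  obtain ⟨hbot, htop, hinf, hsup, hcompl, hpair⟩ := hB.1
  have heB : xᶜ ⊓ y ∈ B := hinf _ (hcompl x (hCB hxC)) _ (hCB hyC)
  have he0 : xᶜ ⊓ y ≠ ⊥ := by
    intro h
    have h2 := om hxy.le
    rw [h, sup_bot_eq] at h2
    exact hxy.ne h2
  obtain ⟨a, haB, ha0, hatom, hae⟩ := hb B hB (xᶜ ⊓ y) heB he0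
  have hdich : ∀ c ∈ B, a ⊓ c = ⊥ ∨ a ≤ c := by
    intro c hc
    by_cases h : a ⊓ c = ⊥
    · exact Or.inl h
    have h2 := hatom (a ⊓ c) (hinf a haB c hc)
    have h3 : ⊥ < a ⊓ c := bot_lt_iff_ne_bot.2 h
    have h4 : ¬ a ⊓ c < a := fun hlt => h2 ⟨h3, hlt⟩
    have h5 : a ⊓ c = a := (eq_of_le_of_not_lt inf_le_left h4)
    exact Or.inr (h5 ▸ inf_le_right)
  have hax : a ≤ xᶜ := hae.trans inf_le_left
  have hay : a ≤ y := hae.trans inf_le_right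
  -- if a ≤ d and d ≤ aᶜ then contradiction
  have hcontr : ∀ d : α, a ≤ d → d ≤ aᶜ → False := by
    intro d h1 h2
    have : a ≤ a ⊓ aᶜ := le_inf le_rfl (h1.trans h2)
    rw [oinf_compl] at this
    exact ha0 (le_bot_iff.1 this)
  set D1 : Set α := {c ∈ C | a ≤ c} with hD1def
  have hD1C : D1 ⊆ C := fun c hc => hc.1
  set t := sInf D1 with ht_def
  have htC : t ∈ C := sInf_mem_maxChain hC hD1C
  have hat : a ≤ t := le_sInf fun c hc => hc.2
  have hty : t ≤ y := sInf_le ⟨hyC, hay⟩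
  set D0 : Set α := {c ∈ C | c ≤ aᶜ} with hD0def
  have hD0C : D0 ⊆ C := fun c hc => hc.1
  set s := sSup D0 with hs_def
  have hsC : s ∈ C := sSup_mem_maxChain hC hD0C
  have hsa : s ≤ aᶜ := sSup_le fun c hc => hc.2
  have hxs : x ≤ s := le_sSup ⟨hxC, oswap hax⟩
  have hD0t : ∀ d ∈ D0, d ≤ t := by
    intro d hd
    rcases eq_or_ne d t with rfl | hne
    · exact le_rfl
    rcases hC.1 hd.1 htC hne with h | h
    · exact h
    · exact absurd (hcontr d (hat.trans h) hd.2) not_false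
  have hst : s ≤ t := sSup_le hD0t
  have hstlt : s < t := hst.lt_of_ne fun h => hcontr t hat (h ▸ hsa)
  refine ⟨s, hsC, t, htC, hxs, hty, hstlt, ?_⟩
  rintro c hcC ⟨h1, h2⟩
  rcases hdich c (hCB hcC) with h | h
  · have hcc : c = (c ⊓ a) ⊔ (c ⊓ aᶜ) := hpair c (hCB hcC) a haB
    rw [inf_comm c a, h, bot_sup_eq] at hcc
    have hcac : c ≤ aᶜ := hcc.le.trans inf_le_right
    exact absurd (le_sSup (show c ∈ D0 from ⟨hcC, hcac⟩) : c ≤ s) (LT.lt.not_ge h1)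
  · exact absurd (sInf_le (show c ∈ D1 from ⟨hcC, h⟩) : t ≤ c) (LT.lt.not_ge h2)
end

section
/- Let L and M be complete OMLs and let f : L → M be a surjective map preserving arbitrary suprema, arbitrary infima, and orthocomplementation. Then there exists a central element c of L such that M is isomorphic, as an ortholattice, to the interval [⊥, c] of L equipped with the induced order and the orthocomplementation z ↦ zᶜ ⊓ c. -/
/-- if `f : L → M` is a surjective complete homomorphism of complete OMLs,
then there is a central element `c` of `L` such that `M` is isomorphic, as an
ortholattice, to the interval `[⊥, c]` of `L` with the orthocomplementation
`z ↦ zᶜ ⊓ c`. -/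
theorem surjective_complete_hom_image_iso_interval {L M : Type*} [CompleteOML L]
    [CompleteOML M] (f : L → M) (hsurj : Function.Surjective f)
    (hsSup : ∀ S : Set L, f (sSup S) = sSup (f '' S))
    (hsInf : ∀ S : Set L, f (sInf S) = sInf (f '' S))
    (hcompl : ∀ x : L, f (xᶜ) = (f x)ᶜ) :
    ∃ c : L, (∀ y : L, Commutes c y) ∧
      ∃ g : M ≃o Set.Iic c, ∀ z : M, ((g (zᶜ) : L)) = ((g z : L))ᶜ ⊓ c := by
  have fsup : ∀ x y : L, f (x ⊔ y) = f x ⊔ f y := by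
    intro x y
    have := hsSup {x, y}
    simpa [Set.image_pair] using this
  have finf : ∀ x y : L, f (x ⊓ y) = f x ⊓ f y := by
    intro x y
    have := hsInf {x, y}
    simpa [Set.image_pair] using this
  have fmono : ∀ x y : L, x ≤ y → f x ≤ f y := by
    intro x y hxy
    have : f x ⊔ f y = f y := by rw [← fsup, sup_eq_right.mpr hxy]
    exact le_of_sup_eq this
  set a : L := sSup {x : L | f x = ⊥} with ha
  set c : L := aᶜ with hc
  have fa : f a = ⊥ := by
    rw [ha, hsSup]
    refine le_antisymm (sSup_le ?_) bot_le
    rintro b ⟨x, hx, rfl⟩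
    exact hx.le
  have botc : (⊥ : M)ᶜ = ⊤ := by
    have := CompleteOML.sup_compl (⊥ : M)
    simpa using this
  have topc : (⊤ : M)ᶜ = ⊥ := by
    have := CompleteOML.inf_compl (⊤ : M)
    simpa using this
  have fc : f c = ⊤ := by rw [hc, hcompl, fa, botc]
  have ker_le : ∀ x : L, f x = ⊥ → x ≤ a := fun x hx => le_sSup hx
  -- elements of the kernel below c are ⊥
  have ker_c : ∀ x : L, f x = ⊥ → x ≤ c → x = ⊥ := by
    intro x hx hxc
    have h1 : x ≤ a ⊓ aᶜ := le_inf (ker_le x hx) hxc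
    rw [CompleteOML.inf_compl] at h1
    exact le_antisymm h1 bot_le
  -- key: below c, f is order-reflecting
  have key : ∀ u v : L, u ≤ c → v ≤ c → f u = f v → u ≤ v := by
    intro u v hu hv huv
    have ht : f ((u ⊓ v)ᶜ ⊓ u) = ⊥ := by
      rw [finf, hcompl, finf, huv, inf_idem, inf_comm, CompleteOML.inf_compl]
    have tbot : (u ⊓ v)ᶜ ⊓ u = ⊥ := ker_c _ ht (inf_le_right.trans hu)
    have hom := CompleteOML.orthomodular (u ⊓ v) u inf_le_left
    rw [tbot, sup_bot_eq] at hom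
    exact inf_eq_left.mp hom
  have keyeq : ∀ u v : L, u ≤ c → v ≤ c → f u = f v → u = v := fun u v hu hv h =>
    le_antisymm (key u v hu hv h) (key v u hv hu h.symm)
  -- c is central
  have hcentral : ∀ y : L, Commutes c y := by
    intro y
    have hd : (c ⊓ y) ⊔ (c ⊓ yᶜ) ≤ c := sup_le inf_le_left inf_le_left
    have he : f (((c ⊓ y) ⊔ (c ⊓ yᶜ))ᶜ ⊓ c) = ⊥ := by
      simp only [finf, fsup, fc, hcompl, fa, botc, top_inf_eq,
        CompleteOML.sup_compl, topc, bot_inf_eq]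
    have ebot : ((c ⊓ y) ⊔ (c ⊓ yᶜ))ᶜ ⊓ c = ⊥ := ker_c _ he inf_le_right
    have hom := CompleteOML.orthomodular _ c hd
    rw [ebot, sup_bot_eq] at hom
    exact hom.symm
  -- the section
  set s : M → L := fun z => sSup (f ⁻¹' {z}) ⊓ c with hs
  have hsle : ∀ z, s z ≤ c := fun z => inf_le_right
  have fs : ∀ z : M, f (s z) = z := by
    intro z
    rw [hs]
    simp only
    rw [finf, fc, inf_top_eq, hsSup, hsurj.image_preimage, sSup_singleton]
  have sf : ∀ x : L, x ≤ c → s (f x) = x := fun x hx =>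
    keyeq _ _ (hsle _) hx (fs (f x))
  have smono : ∀ z w : M, z ≤ w → s z ≤ s w := by
    intro z w hzw
    have h1 : f (s z ⊓ s w) = f (s z) := by
      rw [finf, fs, fs, inf_eq_left.mpr hzw]
    exact (key _ _ (hsle z) (inf_le_right.trans (hsle w)) h1.symm).trans inf_le_right
  refine ⟨c, hcentral, ⟨⟨⟨fun z => ⟨s z, hsle z⟩, fun x => f x.1,
    fun z => fs z, fun x => Subtype.ext (sf x.1 x.2)⟩, ?_⟩, ?_⟩⟩
  · intro z w
    constructor
    · intro h
      have : f (s z) ≤ f (s w) := fmono _ _ h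
      rwa [fs, fs] at this
    · intro h
      exact smono z w h
  · intro z
    show s (zᶜ) = (s z)ᶜ ⊓ c
    refine keyeq _ _ (hsle _) inf_le_right ?_
    rw [fs, finf, hcompl, fs, fc, inf_top_eq]
end

section
/- Let (L_i)_{i ∈ I} be a family of complete OMLs, each of which is completely hereditarily atomic. Then the product Π_{i∈I} L_i, with componentwise order and componentwise orthocomplementation, is a complete OML that is completely hereditarily atomic. -/
lemma CompleteOML.compl_bot {α : Type*} [CompleteOML α] : (⊥ : α)ᶜ = ⊤ := by
  have := CompleteOML.sup_compl (⊥ : α); simpa using this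

lemma CompleteOML.eq_bot_of_le_compl {α : Type*} [CompleteOML α] {x : α} (h : x ≤ xᶜ) :
    x = ⊥ := by
  have : x ≤ x ⊓ xᶜ := le_inf le_rfl h
  rw [CompleteOML.inf_compl] at this
  exact le_bot_iff.mp this

lemma CompleteSubalgebra.inf_mem {α : Type*} [CompleteLattice α] [Compl α] {S : Set α}
    (h : CompleteSubalgebra S) {x y : α} (hx : x ∈ S) (hy : y ∈ S) : x ⊓ y ∈ S := by
  have := h.2.2 {x, y} (by intro z hz; rcases hz with rfl | rfl <;> assumption)
  simpa [sInf_pair] using this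

/-- The projection of a complete subalgebra of a product to one coordinate is a
complete subalgebra. -/
lemma proj_completeSubalgebra {I : Type*} {L : I → Type*} [∀ i, CompleteOML (L i)]
    {S : Set (∀ i, L i)} (h : CompleteSubalgebra S) (i : I) :
    CompleteSubalgebra ((fun y : ∀ i, L i => y i) '' S) := by
  refine ⟨?_, ?_, ?_⟩
  · rintro x ⟨y, hy, rfl⟩
    exact ⟨yᶜ, h.1 y hy, rfl⟩
  · intro T hT
    set U : Set (∀ i, L i) := {y | y ∈ S ∧ y i ∈ T} with hU
    refine ⟨sSup U, h.2.1 U (fun y hy => hy.1), ?_⟩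
    show (sSup U) i = sSup T
    rw [show (sSup U) i = ⨆ f : U, (f : ∀ i, L i) i from sSup_apply]
    apply le_antisymm
    · exact iSup_le fun f => le_sSup f.2.2
    · apply sSup_le
      intro t ht
      obtain ⟨y, hyS, hyt⟩ := hT ht
      have hyt' : y i = t := hyt
      have hyU : y ∈ U := ⟨hyS, by rw [hyt']; exact ht⟩
      have : (⟨y, hyU⟩ : U).1 i ≤ ⨆ f : U, (f : ∀ i, L i) i :=
        le_iSup (fun f : U => (f : ∀ i, L i) i) ⟨y, hyU⟩
      exact le_trans hyt'.symm.le this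
  · intro T hT
    set U : Set (∀ i, L i) := {y | y ∈ S ∧ y i ∈ T} with hU
    refine ⟨sInf U, h.2.2 U (fun y hy => hy.1), ?_⟩
    show (sInf U) i = sInf T
    rw [show (sInf U) i = ⨅ f : U, (f : ∀ i, L i) i from sInf_apply]
    apply le_antisymm
    · apply le_sInf
      intro t ht
      obtain ⟨y, hyS, hyt⟩ := hT ht
      have hyt' : y i = t := hyt
      have hyU : y ∈ U := ⟨hyS, by rw [hyt']; exact ht⟩
      have : ⨅ f : U, (f : ∀ i, L i) i ≤ (⟨y, hyU⟩ : U).1 i :=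
        iInf_le (fun f : U => (f : ∀ i, L i) i) ⟨y, hyU⟩
      exact le_trans this hyt'.le
    · exact le_iInf fun f => sInf_le f.2.2

/-- the product of a family of completely hereditarily atomic complete
OMLs, with componentwise order (the product is a complete lattice by the Pi instance)
and componentwise orthocomplementation, is a complete OML that is completely
hereditarily atomic. -/
theorem pi_completeOML_completelyHereditarilyAtomic {I : Type*} {L : I → Type*}
    [∀ i, CompleteOML (L i)]
    (hcha : ∀ i, ∀ S : Set (L i), CompleteSubalgebra S → AtomicSubset S) :
    (∀ x y : ∀ i, L i, x ≤ y ↔ ∀ i, x i ≤ y i) ∧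
    (∀ (x : ∀ i, L i) (i : I), (xᶜ) i = (x i)ᶜ) ∧
    (∀ x : ∀ i, L i, xᶜᶜ = x) ∧
    (∀ x y : ∀ i, L i, x ≤ y → yᶜ ≤ xᶜ) ∧
    (∀ x : ∀ i, L i, x ⊓ xᶜ = ⊥) ∧
    (∀ x : ∀ i, L i, x ⊔ xᶜ = ⊤) ∧
    (∀ x y : ∀ i, L i, x ≤ y → x ⊔ (xᶜ ⊓ y) = y) ∧
    (∀ S : Set (∀ i, L i), CompleteSubalgebra S → AtomicSubset S) := by
  refine ⟨fun x y => Iff.rfl, fun x i => rfl, ?_, ?_, ?_, ?_, ?_, ?_⟩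
  · intro x; funext i; exact CompleteOML.compl_compl (x i)
  · intro x y h i; exact CompleteOML.compl_antitone _ _ (h i)
  · intro x; funext i; exact CompleteOML.inf_compl (x i)
  · intro x; funext i; exact CompleteOML.sup_compl (x i)
  · intro x y h; funext i; exact CompleteOML.orthomodular _ _ (h i)
  · intro S hS x hxS hx
    -- pick a coordinate where x is nonzero
    have : ∃ i, x i ≠ ⊥ := by
      by_contra hc
      push_neg at hc
      exact hx (funext fun i => hc i)
    obtain ⟨i, hxi⟩ := this
    -- the projection is a complete subalgebra, hence atomic
    have hatom := hcha i _ (proj_completeSubalgebra hS i) (x i) ⟨x, hxS, rfl⟩ hxi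
    obtain ⟨a, ⟨z, hzS, hzi⟩, ha0, hamin, hax⟩ := hatom
    -- the candidate atom of S
    set D : Set (∀ i, L i) := {y | y ∈ S ∧ y ≤ x ∧ a ≤ y i} with hD
    set b : ∀ i, L i := sInf D with hb
    have hbS : b ∈ S := hS.2.2 D fun y hy => hy.1
    have hxD : x ∈ D := ⟨hxS, le_rfl, hax⟩
    have hbx : b ≤ x := sInf_le hxD
    -- b i = a
    have habi : a ≤ b i := by
      have h1 : b i = ⨅ f : D, (f : ∀ i, L i) i := sInf_apply
      rw [h1]
      exact le_iInf fun f => f.2.2.2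
    have hbia : b i = a := by
      have hxz : x ⊓ z ∈ D := by
        refine ⟨hS.inf_mem hxS hzS, inf_le_left, ?_⟩
        have : (x ⊓ z) i = x i ⊓ a := by rw [← hzi]; rfl
        rw [this]
        exact le_inf hax le_rfl
      have := sInf_le hxz
      have hba : b i ≤ a := by
        calc b i ≤ (x ⊓ z) i := this i
        _ = x i ⊓ a := by rw [← hzi]; rfl
        _ ≤ a := inf_le_right
      exact le_antisymm hba habi
    have hb0 : b ≠ ⊥ := by
      intro hbB
      apply ha0
      rw [← hbia, hbB]; rfl
    refine ⟨b, hbS, hb0, ?_, hbx⟩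
    rintro s hsS ⟨hs0, hsb⟩
    have hsi_le : s i ≤ a := hbia ▸ hsb.le i
    have hsi_mem : s i ∈ (fun y : ∀ i, L i => y i) '' S := ⟨s, hsS, rfl⟩
    by_cases hsia : s i = ⊥
    · -- then b ⊓ sᶜ ∈ D, so b ≤ sᶜ, so s ≤ sᶜ, so s = ⊥
      have hu : b ⊓ sᶜ ∈ D := by
        refine ⟨hS.inf_mem hbS (hS.1 s hsS), le_trans inf_le_left hbx, ?_⟩
        have : (b ⊓ sᶜ) i = b i ⊓ (s i)ᶜ := rfl
        rw [this, hbia, hsia, CompleteOML.compl_bot, inf_top_eq]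
      have hbsc : b ≤ sᶜ := le_trans (sInf_le hu) inf_le_right
      have : s ≤ sᶜ := le_trans hsb.le hbsc
      have hsbot : s = ⊥ := funext fun j => CompleteOML.eq_bot_of_le_compl (this j)
      exact hs0.ne' hsbot
    · -- then s i = a by atomicity, so s ∈ D, so b ≤ s, contradiction
      have hsia' : s i = a := by
        by_contra hne
        exact hamin (s i) hsi_mem ⟨bot_lt_iff_ne_bot.mpr hsia, lt_of_le_of_ne hsi_le hne⟩
      have hsD : s ∈ D := ⟨hsS, le_trans hsb.le hbx, hsia' ▸ le_rfl⟩
      exact absurd (sInf_le hsD : b ≤ s) hsb.not_ge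
end

section
/- Let L and M be complete OMLs and let f : L → M be a surjective map preserving arbitrary suprema, arbitrary infima, and orthocomplementation. If L is algebraic, then M is algebraic; and if L is completely hereditarily atomic, then M is completely hereditarily atomic. -/
/-- A complete lattice is algebraic (compactly generated) if every element is the
supremum of the compact elements below it. -/
def IsAlgebraicLattice (α : Type*) [CompleteLattice α] : Prop :=
  ∀ x : α, x = sSup {c : α | IsCompactElement c ∧ c ≤ x}

/-- surjective complete homomorphic images of algebraic complete OMLs are
algebraic, and surjective complete homomorphic images of completely hereditarily atomic
complete OMLs are completely hereditarily atomic. -/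
theorem complete_hom_image_algebraic_and_cha {L M : Type*} [CompleteOML L] [CompleteOML M]
    (f : L → M) (hsurj : Function.Surjective f)
    (hsSup : ∀ S : Set L, f (sSup S) = sSup (f '' S))
    (hsInf : ∀ S : Set L, f (sInf S) = sInf (f '' S))
    (hcompl : ∀ x : L, f (xᶜ) = (f x)ᶜ) :
    (IsAlgebraicLattice L → IsAlgebraicLattice M) ∧
    ((∀ S : Set L, CompleteSubalgebra S → AtomicSubset S) →
      ∀ S : Set M, CompleteSubalgebra S → AtomicSubset S) := by
  classical
  -- f is monotone
  have hmono : Monotone f := by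
    intro x y hxy
    have h1 : f (sSup {x, y}) = sSup (f '' {x, y}) := hsSup _
    have h2 : sSup ({x, y} : Set L) = y := by
      simp [sSup_insert, sup_eq_right.mpr hxy]
    rw [h2] at h1
    have : f x ≤ sSup (f '' {x, y}) := le_sSup ⟨x, by simp⟩
    rw [← h1] at this; exact this
  have hbot : f ⊥ = ⊥ := by
    have := hsSup ∅; simpa using this
  -- binary infs
  have hinf : ∀ x y : L, f (x ⊓ y) = f x ⊓ f y := by
    intro x y
    have h1 : f (sInf {x, y}) = sInf (f '' {x, y}) := hsInf _
    simpa [sInf_insert, Set.image_insert_eq] using h1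
  -- the right adjoint
  set g : M → L := fun m => sSup {x : L | f x ≤ m} with hg
  have hfg : ∀ m, f (g m) = m := by
    intro m
    obtain ⟨y, hy⟩ := hsurj m
    have hle : f (g m) ≤ m := by
      rw [hg]; simp only
      rw [hsSup]
      apply sSup_le
      rintro _ ⟨x, hx, rfl⟩
      exact hx
    have hge : m ≤ f (g m) := by
      have hy' : y ∈ {x : L | f x ≤ m} := le_of_eq hy
      have := hmono (le_sSup hy')
      rwa [hy] at this
    exact le_antisymm hle hge
  have hgmono : Monotone g := fun m m' h =>
    sSup_le_sSup (fun x hx => le_trans hx h)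
  have hadj : ∀ (x : L) (m : M), f x ≤ m → x ≤ g m := fun x m h => le_sSup h
  set a : L := g ⊥ with ha
  have hfa : f a = ⊥ := hfg ⊥
  -- f (x ⊓ aᶜ) = f x
  have hkey : ∀ x : L, f (x ⊓ aᶜ) = f x := by
    intro x
    rw [hinf, hcompl, hfa]
    have : (⊥ : M)ᶜ = ⊤ := by
      have := CompleteOML.sup_compl (⊥ : M)
      rwa [bot_sup_eq] at this
    rw [this, inf_top_eq]
  set ψ : M → L := fun m => g m ⊓ aᶜ with hψ
  have hψle : ∀ m, ψ m ≤ aᶜ := fun m => inf_le_right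
  have hfψ : ∀ m, f (ψ m) = m := fun m => by rw [hψ]; simp only; rw [hkey, hfg]
  have hψmono : Monotone ψ := fun m m' h => inf_le_inf_right _ (hgmono h)
  -- the crucial section property: ψ (f x) = x whenever x ≤ aᶜ
  have hsec : ∀ x : L, x ≤ aᶜ → ψ (f x) = x := by
    intro x hx
    have hxz : x ≤ ψ (f x) := le_inf (hadj x (f x) le_rfl) hx
    have hfz : f (ψ (f x)) = f x := hfψ (f x)
    have hom := CompleteOML.orthomodular x (ψ (f x)) hxz
    have h0 : f (xᶜ ⊓ ψ (f x)) = ⊥ := by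
      rw [hinf, hcompl, hfz, inf_comm, CompleteOML.inf_compl]
    have h1 : xᶜ ⊓ ψ (f x) ≤ a := hadj _ _ (le_of_eq h0)
    have h2 : xᶜ ⊓ ψ (f x) ≤ aᶜ := le_trans inf_le_right (hψle _)
    have h3 : xᶜ ⊓ ψ (f x) = ⊥ := by
      have := le_inf h1 h2
      rwa [CompleteOML.inf_compl, le_bot_iff] at this
    rw [h3, sup_bot_eq] at hom
    exact hom.symm
  constructor
  · -- algebraic
    intro hL m
    have hcpt : ∀ c : L, IsCompactElement c → c ≤ aᶜ →
        IsCompactElement (f c) := by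
      intro c hc hcle
      rw [CompleteLattice.isCompactElement_iff_exists_le_sSup_of_le_sSup] at hc ⊢
      intro S hS
      set T : Set L := ψ '' S with hT
      have hfT : f '' T = S := by
        rw [hT, ← Set.image_comp]
        ext s; constructor
        · rintro ⟨u, hu, rfl⟩; simpa [hfψ] using hu
        · intro hs; exact ⟨s, hs, hfψ s⟩
      have hTle : sSup T ≤ aᶜ := sSup_le (by rintro _ ⟨u, _, rfl⟩; exact hψle u)
      have h1 : f (sSup T) = sSup S := by rw [hsSup, hfT]
      have h2 : c ≤ sSup T := by
        have := hψmono (le_trans hS (le_of_eq h1.symm))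
        rwa [hsec c hcle, hsec _ hTle] at this
      obtain ⟨t, htT, htc⟩ := hc T h2
      refine ⟨t.image f, ?_, ?_⟩
      · intro s hs
        simp only [Finset.coe_image] at hs
        obtain ⟨u, hu, rfl⟩ := hs
        rw [← hfT]; exact ⟨u, htT hu, rfl⟩
      · have : f c ≤ f (t.sup id) := hmono htc
        refine le_trans this ?_
        have : f (t.sup id) = (t.image f).sup id := by
          rw [Finset.sup_id_eq_sSup, Finset.sup_id_eq_sSup, hsSup,
            Finset.coe_image]
        rw [this]
    -- now prove m is the sup of compacts below it
    set K : Set L := {c : L | IsCompactElement c ∧ c ≤ ψ m} with hK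
    have hKsup : ψ m = sSup K := hL (ψ m)
    apply le_antisymm
    · conv_lhs => rw [← hfψ m, hKsup]
      rw [hsSup]
      apply sSup_le
      rintro _ ⟨c, ⟨hc1, hc2⟩, rfl⟩
      apply le_sSup
      refine ⟨hcpt c hc1 (le_trans hc2 (hψle m)), ?_⟩
      have := hmono hc2; rwa [hfψ] at this
    · exact sSup_le (fun c hc => hc.2)
  · -- completely hereditarily atomic
    intro hL S hS m hm hmne
    set S₀ : Set L := f ⁻¹' S with hS₀
    have hS₀sub : CompleteSubalgebra S₀ := by
      refine ⟨fun x hx => ?_, fun T hT => ?_, fun T hT => ?_⟩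
      · show f xᶜ ∈ S; rw [hcompl]; exact hS.1 _ hx
      · show f (sSup T) ∈ S; rw [hsSup]
        exact hS.2.1 _ (by rintro _ ⟨u, hu, rfl⟩; exact hT hu)
      · show f (sInf T) ∈ S; rw [hsInf]
        exact hS.2.2 _ (by rintro _ ⟨u, hu, rfl⟩; exact hT hu)
    have hx₀ : ψ m ∈ S₀ := by show f (ψ m) ∈ S; rw [hfψ]; exact hm
    have hxne : ψ m ≠ ⊥ := by
      intro h; apply hmne; rw [← hfψ m, h, hbot]
    obtain ⟨p, hpS₀, hpne, hpatom, hpx⟩ := hL S₀ hS₀sub (ψ m) hx₀ hxne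
    have hple : p ≤ aᶜ := le_trans hpx (hψle m)
    have hfpne : f p ≠ ⊥ := by
      intro h
      apply hpne
      have h1 : p ≤ a := hadj p ⊥ (le_of_eq h)
      have := le_inf h1 hple
      rwa [CompleteOML.inf_compl, le_bot_iff] at this
    refine ⟨f p, hpS₀, hfpne, ?_, by have := hmono hpx; rwa [hfψ] at this⟩
    rintro s hsS ⟨hs1, hs2⟩
    apply hpatom (ψ s) (by show f (ψ s) ∈ S; rw [hfψ]; exact hsS)
    constructor
    · rw [bot_lt_iff_ne_bot]
      intro h
      have : s = ⊥ := by rw [← hfψ s, h, hbot]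
      exact absurd this (ne_of_gt hs1)
    · have h1 : ψ s ≤ p := by
        have := hψmono (le_of_lt hs2)
        rwa [hsec p hple] at this
      refine lt_of_le_of_ne h1 ?_
      intro h
      have : s = f p := by rw [← hfψ s, h]
      exact absurd this (ne_of_lt hs2)
end

section
/- Let L be a completely hereditarily atomic OML, let C(L) be its center, and let A be the set of atoms of C(L). Then C(L) is an atomic complete Boolean algebra, the map φ : L → Π_{a∈A} [⊥, a] given by φ(x)(a) = x ⊓ a is an order isomorphism, and for each a ∈ A the interval [⊥, a] with orthocomplementation z ↦ zᶜ ⊓ a is a directly irreducible OML (its center is {⊥, a}). -/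
/-- The center of an OML: the set of elements commuting with every element. -/
def CenterSet (α : Type*) [Lattice α] [Compl α] : Set α := {c | ∀ y : α, Commutes c y}

/-- An atom of the center of `α`. -/
def IsCentralAtom {α : Type*} [CompleteOML α] (a : α) : Prop :=
  a ∈ CenterSet α ∧ a ≠ ⊥ ∧ ∀ s ∈ CenterSet α, ¬ (⊥ < s ∧ s < a)

section Aux
variable {L : Type*} [CompleteOML L]

lemma oml_cc (x : L) : xᶜᶜ = x := CompleteOML.compl_compl x
lemma oml_anti {x y : L} (h : x ≤ y) : yᶜ ≤ xᶜ := CompleteOML.compl_antitone x y h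
lemma oml_om {x y : L} (h : x ≤ y) : x ⊔ (xᶜ ⊓ y) = y := CompleteOML.orthomodular x y h

lemma oml_le_compl {x y : L} (h : x ≤ yᶜ) : y ≤ xᶜ := by
  have := oml_anti h; rwa [oml_cc] at this

lemma oml_compl_le_s9 {x y : L} (h : xᶜ ≤ y) : yᶜ ≤ x := by
  have := oml_anti h; rwa [oml_cc] at this

lemma oml_compl_bot : (⊥ : L)ᶜ = ⊤ := by
  have := CompleteOML.sup_compl (⊥ : L); simpa using this

lemma oml_compl_top : (⊤ : L)ᶜ = ⊥ := by
  have := CompleteOML.inf_compl (⊤ : L); simpa using this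

lemma oml_compl_sup (x y : L) : (x ⊔ y)ᶜ = xᶜ ⊓ yᶜ := by
  refine le_antisymm (le_inf (oml_anti le_sup_left) (oml_anti le_sup_right)) ?_
  refine oml_le_compl (sup_le ?_ ?_)
  · have : xᶜ ⊓ yᶜ ≤ xᶜ := inf_le_left
    have := oml_anti this; rwa [oml_cc] at this
  · have : xᶜ ⊓ yᶜ ≤ yᶜ := inf_le_right
    have := oml_anti this; rwa [oml_cc] at this

lemma oml_compl_inf (x y : L) : (x ⊓ y)ᶜ = xᶜ ⊔ yᶜ := by
  have := oml_compl_sup xᶜ yᶜ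
  rw [oml_cc, oml_cc] at this
  rw [← this, oml_cc]

lemma oml_dual_om {u c : L} (h : u ≤ c) : (u ⊔ cᶜ) ⊓ c = u := by
  have h3 := oml_om (oml_anti h)
  have h4 := congrArg (·ᶜ) h3
  simp only [oml_compl_sup, oml_compl_inf, oml_cc] at h4
  rw [inf_comm, sup_comm cᶜ] at h4
  exact h4

lemma comm_symm {x y : L} (h : Commutes x y) : Commutes y x := by
  unfold Commutes at h ⊢
  have h1 : (x ⊓ y) ⊔ ((x ⊓ y)ᶜ ⊓ y) = y := oml_om inf_le_right
  have h2 : (x ⊓ y)ᶜ ⊓ y ≤ xᶜ := by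
    refine oml_le_compl ?_
    rw [oml_compl_inf, oml_cc]
    calc x = (x ⊓ y) ⊔ (x ⊓ yᶜ) := h
      _ ≤ (x ⊓ y) ⊔ yᶜ := sup_le_sup_left inf_le_right _
  refine le_antisymm ?_ (sup_le inf_le_left inf_le_left)
  calc y = (x ⊓ y) ⊔ ((x ⊓ y)ᶜ ⊓ y) := h1.symm
    _ ≤ (y ⊓ x) ⊔ (y ⊓ xᶜ) := sup_le_sup (inf_comm x y).le (le_inf inf_le_right h2)

lemma comm_compl_right {x y : L} (h : Commutes x y) : Commutes x yᶜ := by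
  unfold Commutes at h ⊢
  rw [oml_cc, sup_comm]; exact h

lemma center_compl {c : L} (h : c ∈ CenterSet L) : cᶜ ∈ CenterSet L :=
  fun y => comm_symm (comm_compl_right (comm_symm (h y)))

lemma center_sSup {T : Set L} (hT : T ⊆ CenterSet L) : sSup T ∈ CenterSet L := by
  intro y
  refine le_antisymm ?_ (sup_le inf_le_left inf_le_left)
  refine sSup_le fun t ht => ?_
  calc t = (t ⊓ y) ⊔ (t ⊓ yᶜ) := hT ht y
    _ ≤ (sSup T ⊓ y) ⊔ (sSup T ⊓ yᶜ) :=
        sup_le_sup (inf_le_inf_right _ (le_sSup ht)) (inf_le_inf_right _ (le_sSup ht))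

lemma oml_sInf_eq (T : Set L) : sInf T = (sSup ((·ᶜ) '' T))ᶜ := by
  refine le_antisymm ?_ (le_sInf fun t ht => ?_)
  · refine oml_le_compl (sSup_le ?_)
    rintro z ⟨t, ht, rfl⟩
    exact oml_anti (sInf_le ht)
  · have h1 : tᶜ ≤ sSup ((·ᶜ) '' T) := le_sSup ⟨t, ht, rfl⟩
    have := oml_anti h1; rwa [oml_cc] at this

lemma center_sInf {T : Set L} (hT : T ⊆ CenterSet L) : sInf T ∈ CenterSet L := by
  rw [oml_sInf_eq]
  refine center_compl (center_sSup ?_)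
  rintro z ⟨t, ht, rfl⟩
  exact center_compl (hT ht)

lemma central_inf_iSup {ι : Sort*} {c : L} (hc : c ∈ CenterSet L) (g : ι → L) :
    c ⊓ ⨆ i, g i = ⨆ i, c ⊓ g i := by
  set u := ⨆ i, c ⊓ g i with hu
  refine le_antisymm ?_ (iSup_le fun i => ?_)
  case refine_2 =>
    exact le_inf inf_le_left (le_trans inf_le_right (le_iSup g i))
  have huc : u ≤ c := iSup_le fun i => inf_le_left
  have h2 : ⨆ i, g i ≤ u ⊔ cᶜ := iSup_le fun i => by
    calc g i = (g i ⊓ c) ⊔ (g i ⊓ cᶜ) := comm_symm (hc (g i))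
      _ ≤ u ⊔ cᶜ := sup_le_sup (by rw [inf_comm]; exact le_iSup (fun j => c ⊓ g j) i) inf_le_right
  calc c ⊓ ⨆ i, g i ≤ c ⊓ (u ⊔ cᶜ) := inf_le_inf_left _ h2
    _ = (u ⊔ cᶜ) ⊓ c := inf_comm _ _
    _ = u := oml_dual_om huc

lemma central_inf_sup {c : L} (hc : c ∈ CenterSet L) (x y : L) :
    c ⊓ (x ⊔ y) = (c ⊓ x) ⊔ (c ⊓ y) := by
  have := central_inf_iSup hc (fun b : Bool => bif b then x else y)
  simpa [iSup_bool_eq] using this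

end Aux

section Aux2
variable {L : Type*} [CompleteOML L]

lemma sup_central_atoms_eq_top (hat : AtomicSubset (CenterSet L)) :
    (⨆ a : {a : L // IsCentralAtom a}, (a : L)) = ⊤ := by
  set s := ⨆ a : {a : L // IsCentralAtom a}, (a : L) with hs
  have hsmem : s ∈ CenterSet L := by
    have h := center_sSup (T := Set.range fun a : {a : L // IsCentralAtom a} => (a : L))
      (by rintro x ⟨a, rfl⟩; exact a.2.1)
    rwa [sSup_range] at h
  by_contra hs_top
  have hne : sᶜ ≠ ⊥ := fun h => hs_top (by rw [← oml_cc s, h, oml_compl_bot])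
  obtain ⟨a, ham, hane, hmin, hle⟩ := hat sᶜ (center_compl hsmem) hne
  have haatom : IsCentralAtom a := ⟨ham, hane, hmin⟩
  have h1 : a ≤ s := le_iSup (fun b : {a : L // IsCentralAtom a} => (b : L)) ⟨a, haatom⟩
  have h2 : a ≤ ⊥ := by
    rw [← CompleteOML.inf_compl s]; exact le_inf h1 hle
  exact hane (le_bot_iff.mp h2)

lemma central_atoms_disjoint {a b : L} (ha : IsCentralAtom a) (hb : IsCentralAtom b)
    (hne : a ≠ b) : a ⊓ b = ⊥ := by
  have hmem : a ⊓ b ∈ CenterSet L := by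
    have h := center_sInf (T := ({a, b} : Set L))
      (by rintro x (rfl | rfl); exacts [ha.1, hb.1])
    rwa [sInf_pair] at h
  by_contra h
  have hbt : ⊥ < a ⊓ b := bot_lt_iff_ne_bot.mpr h
  have e1 : a ⊓ b = a := by
    by_contra he; exact ha.2.2 _ hmem ⟨hbt, lt_of_le_of_ne inf_le_left he⟩
  have e2 : a ⊓ b = b := by
    by_contra he; exact hb.2.2 _ hmem ⟨hbt, lt_of_le_of_ne inf_le_right he⟩
  exact hne (e1.symm.trans e2)

lemma eq_iSup_inf_atoms (hat : AtomicSubset (CenterSet L)) (x : L) :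
    x = ⨆ a : {a : L // IsCentralAtom a}, x ⊓ (a : L) := by
  set u := ⨆ a : {a : L // IsCentralAtom a}, x ⊓ (a : L) with hu
  have hux : u ≤ x := iSup_le fun a => inf_le_left
  have hw : x ⊓ uᶜ = ⊥ := by
    have hwa : ∀ a : {a : L // IsCentralAtom a}, x ⊓ uᶜ ≤ (a : L)ᶜ := fun a => by
      have hcomm : x ⊓ uᶜ = (x ⊓ uᶜ ⊓ a) ⊔ (x ⊓ uᶜ ⊓ (a : L)ᶜ) := comm_symm (a.2.1 (x ⊓ uᶜ))
      have h1 : x ⊓ uᶜ ⊓ (a : L) = ⊥ := by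
        have hle1 : x ⊓ uᶜ ⊓ (a : L) ≤ u :=
          le_trans (inf_le_inf_right _ inf_le_left)
            (le_iSup (fun b : {a : L // IsCentralAtom a} => x ⊓ (b : L)) a)
        have hle2 : x ⊓ uᶜ ⊓ (a : L) ≤ uᶜ := le_trans inf_le_left inf_le_right
        have h3 := le_inf hle1 hle2
        rw [CompleteOML.inf_compl] at h3
        exact le_bot_iff.mp h3
      rw [hcomm, h1, bot_sup_eq]; exact inf_le_right
    have h2 : (⨆ a : {a : L // IsCentralAtom a}, (a : L)) ≤ (x ⊓ uᶜ)ᶜ :=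
      iSup_le fun a => oml_le_compl (hwa a)
    have h3 : x ⊓ uᶜ ≤ (⨆ a : {a : L // IsCentralAtom a}, (a : L))ᶜ := oml_le_compl h2
    rw [sup_central_atoms_eq_top hat, oml_compl_top] at h3
    exact le_bot_iff.mp h3
  have h4 := oml_om hux
  rw [inf_comm, hw, sup_bot_eq] at h4
  exact h4.symm

lemma inf_atom_iSup (f : ∀ a : {a : L // IsCentralAtom a}, Set.Iic (a : L))
    (a : {a : L // IsCentralAtom a}) :
    (⨆ b, ((f b : L))) ⊓ (a : L) = (f a : L) := by
  rw [inf_comm, central_inf_iSup a.2.1]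
  refine le_antisymm (iSup_le fun b => ?_) ?_
  · by_cases hb : b = a
    · subst hb; exact inf_le_right
    · have hdis : (a : L) ⊓ (b : L) = ⊥ :=
        central_atoms_disjoint a.2 b.2 (fun h => hb (Subtype.ext h.symm))
      have h1 : (a : L) ⊓ (f b : L) ≤ (a : L) ⊓ (b : L) :=
        inf_le_inf_left _ (Set.mem_Iic.mp (f b).2)
      rw [hdis] at h1
      exact h1.trans bot_le
  · have h2 : (f a : L) = (a : L) ⊓ (f a : L) :=
      (inf_eq_right.mpr (Set.mem_Iic.mp (f a).2)).symm
    exact h2.le.trans (le_iSup (fun b : {a : L // IsCentralAtom a} => (a : L) ⊓ (f b : L)) a)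
end Aux2

/-- if `L` is a completely hereditarily atomic complete OML, then its
center is an atomic complete Boolean algebra (a complete subalgebra, distributive, and
atomic), the map `φ(x)(a) = x ⊓ a` is an order isomorphism of `L` onto the product of
the intervals `[⊥, a]` over the atoms `a` of the center, and each interval `[⊥, a]`,
with the orthocomplementation `z ↦ zᶜ ⊓ a`, is directly irreducible: its center is
`{⊥, a}`. -/
theorem cha_decomposition {L : Type*} [CompleteOML L]
    (hcha : ∀ S : Set L, CompleteSubalgebra S → AtomicSubset S) :
    CompleteSubalgebra (CenterSet L) ∧
    (∀ x ∈ CenterSet L, ∀ y ∈ CenterSet L, ∀ z ∈ CenterSet L,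
      x ⊓ (y ⊔ z) = (x ⊓ y) ⊔ (x ⊓ z)) ∧
    AtomicSubset (CenterSet L) ∧
    (∃ φ : L ≃o (∀ a : {a : L // IsCentralAtom a}, Set.Iic (a : L)),
      ∀ (x : L) (a : {a : L // IsCentralAtom a}), ((φ x a : L)) = x ⊓ (a : L)) ∧
    (∀ a : L, IsCentralAtom a →
      {z : L | z ≤ a ∧ ∀ w : L, w ≤ a → z = (z ⊓ w) ⊔ (z ⊓ (wᶜ ⊓ a))} = {⊥, a}) := by

  have hsub : CompleteSubalgebra (CenterSet L) :=
    ⟨fun x hx => center_compl hx, fun T hT => center_sSup hT, fun T hT => center_sInf hT⟩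
  have hat : AtomicSubset (CenterSet L) := hcha _ hsub
  refine ⟨hsub, ?_, hat, ?_, ?_⟩
  · intro x hx y _ z _
    exact central_inf_sup hx y z
  · refine ⟨⟨⟨fun x => fun a => ⟨x ⊓ (a : L), inf_le_right⟩,
      fun f => ⨆ a, (f a : L), ?_, ?_⟩, ?_⟩, fun x a => rfl⟩
    · intro x
      exact (eq_iSup_inf_atoms hat x).symm
    · intro f
      funext a
      exact Subtype.ext (inf_atom_iSup f a)
    · intro x y
      constructor
      · intro h
        calc x = ⨆ a : {a : L // IsCentralAtom a}, x ⊓ (a : L) := eq_iSup_inf_atoms hat x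
          _ ≤ ⨆ a : {a : L // IsCentralAtom a}, y ⊓ (a : L) :=
              iSup_mono fun a => Subtype.coe_le_coe.mpr (h a)
          _ = y := (eq_iSup_inf_atoms hat y).symm
      · intro h a
        exact Subtype.mk_le_mk.mpr (inf_le_inf_right _ h)
  · intro a ha
    ext z
    simp only [Set.mem_setOf_eq, Set.mem_insert_iff, Set.mem_singleton_iff]
    constructor
    · rintro ⟨hza, hz⟩
      have hzc : z ∈ CenterSet L := by
        intro y
        have h0 := hz (y ⊓ a) inf_le_right
        have e1 : z ⊓ (y ⊓ a) = z ⊓ y := by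
          rw [← inf_assoc]
          exact inf_eq_left.mpr (le_trans inf_le_left hza)
        have e2 : (y ⊓ a)ᶜ ⊓ a = yᶜ ⊓ a := by
          rw [oml_compl_inf, inf_comm, central_inf_sup ha.1, CompleteOML.inf_compl,
            sup_bot_eq, inf_comm]
        have e3 : z ⊓ (yᶜ ⊓ a) = z ⊓ yᶜ := by
          rw [← inf_assoc]
          exact inf_eq_left.mpr (le_trans inf_le_left hza)
        rw [e1, e2, e3] at h0
        exact h0
      by_cases hzb : z = ⊥
      · exact Or.inl hzb
      · right
        by_contra hne
        exact ha.2.2 z hzc ⟨bot_lt_iff_ne_bot.mpr hzb, lt_of_le_of_ne hza hne⟩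
    · rintro (rfl | rfl)
      · exact ⟨bot_le, fun w hw => by simp⟩
      · refine ⟨le_rfl, fun w hw => ?_⟩
        rw [inf_eq_right.mpr hw, inf_eq_right.mpr inf_le_right]
        exact (oml_om hw).symm
end

section
/- Every atomic OML is strongly atomic: if L is an atomic OML, then for all x, z ∈ L with x < z there exists a ∈ L with x ⋖ a ≤ z; that is, every interval of L is atomic. -/
/-- An orthomodular lattice. -/
class OML (α : Type*) extends Lattice α, BoundedOrder α, Compl α where
  compl_compl : ∀ x : α, xᶜᶜ = x
  compl_antitone : ∀ x y : α, x ≤ y → yᶜ ≤ xᶜ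
  inf_compl : ∀ x : α, x ⊓ xᶜ = ⊥
  sup_compl : ∀ x : α, x ⊔ xᶜ = ⊤
  orthomodular : ∀ x y : α, x ≤ y → x ⊔ (xᶜ ⊓ y) = y

/-- every atomic OML is strongly atomic: every interval of it is atomic. -/
theorem atomic_OML_stronglyAtomic {α : Type*} [OML α]
    (hat : ∀ x : α, x ≠ ⊥ → ∃ a : α, IsAtom a ∧ a ≤ x) :
    ∀ x z : α, x < z → ∃ a : α, x ⋖ a ∧ a ≤ z := by
  intro x z hxz
  -- xᶜ ⊓ z ≠ ⊥
  have hne : xᶜ ⊓ z ≠ ⊥ := by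
    intro h
    have := OML.orthomodular x z hxz.le
    rw [h, sup_bot_eq] at this
    exact hxz.ne this
  obtain ⟨p, hp, hple⟩ := hat _ hne
  have hpxc : p ≤ xᶜ := hple.trans inf_le_left
  have hpz : p ≤ z := hple.trans inf_le_right
  have hpnx : ¬ p ≤ x := by
    intro h
    exact hp.1 (le_bot_iff.mp ((le_inf h hpxc).trans (OML.inf_compl x).le))
  refine ⟨x ⊔ p, ⟨lt_of_le_of_ne le_sup_left ?_, ?_⟩, sup_le hxz.le hpz⟩
  · intro h; exact hpnx (h ▸ le_sup_right)
  · -- no b with x < b < x ⊔ p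
    intro b hxb hb
    -- key: xᶜ ⊓ (x ⊔ p) = p
    have hkey : xᶜ ⊓ (x ⊔ p) = p := by
      have hple2 : p ≤ xᶜ ⊓ (x ⊔ p) := le_inf hpxc le_sup_right
      have hom := OML.orthomodular p (xᶜ ⊓ (x ⊔ p)) hple2
      have hr : pᶜ ⊓ (xᶜ ⊓ (x ⊔ p)) = ⊥ := by
        set t := xᶜ ⊓ pᶜ with ht
        have h1 : pᶜ ⊓ (xᶜ ⊓ (x ⊔ p)) ≤ t := by
          refine le_inf (inf_le_of_right_le inf_le_left) inf_le_left
        have h2 : x ⊔ p ≤ tᶜ := by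
          have hx : x ≤ tᶜ := by
            have := OML.compl_antitone t xᶜ inf_le_left
            rwa [OML.compl_compl] at this
          have hp' : p ≤ tᶜ := by
            have := OML.compl_antitone t pᶜ inf_le_right
            rwa [OML.compl_compl] at this
          exact sup_le hx hp'
        have h3 : pᶜ ⊓ (xᶜ ⊓ (x ⊔ p)) ≤ tᶜ :=
          le_trans (inf_le_of_right_le inf_le_right) h2
        exact le_bot_iff.mp (le_trans (le_inf h1 h3) (OML.inf_compl t).le)
      rw [hr, sup_bot_eq] at hom
      exact hom.symm
    have homb := OML.orthomodular x b hxb.le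
    have hxcb : xᶜ ⊓ b ≤ p := hkey ▸ inf_le_inf_left _ hb.le
    rcases (hp.le_iff.mp hxcb) with h | h
    · rw [h, sup_bot_eq] at homb
      exact hxb.ne' homb.symm
    · rw [h] at homb
      exact hb.ne homb.symm
end

section
/- An OML with the covering property is semimodular: if L is an OML such that for every atom p of L and every x ∈ L the interval [x, x ⊔ p] has height at most one (i.e., either p ≤ x, or x ⋖ x ⊔ p), then for all a, b ∈ L, a ⊓ b ⋖ a implies b ⋖ a ⊔ b. -/
namespace OML

variable {α : Type*} [OML α]

lemma compl_inf_bot (x : α) : xᶜ ⊓ x = ⊥ := by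
  rw [inf_comm]; exact inf_compl x

lemma le_compl_of_inf {c x : α} (h : x ≤ cᶜ) : cᶜ ⊓ (c ⊔ x) = x := by
  have hxy : x ≤ cᶜ ⊓ (c ⊔ x) := le_inf h le_sup_right
  have hdm : cᶜ ⊓ xᶜ ≤ (c ⊔ x)ᶜ := by
    have h1 : c ⊔ x ≤ (cᶜ ⊓ xᶜ)ᶜ := by
      refine sup_le ?_ ?_
      · have := compl_antitone (cᶜ ⊓ xᶜ) cᶜ inf_le_left
        rwa [compl_compl] at this
      · have := compl_antitone (cᶜ ⊓ xᶜ) xᶜ inf_le_right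
        rwa [compl_compl] at this
    have := compl_antitone _ _ h1
    rwa [compl_compl] at this
  have hbot : xᶜ ⊓ (cᶜ ⊓ (c ⊔ x)) = ⊥ := by
    refine le_antisymm ?_ bot_le
    have h2 : xᶜ ⊓ (cᶜ ⊓ (c ⊔ x)) ≤ (c ⊔ x)ᶜ ⊓ (c ⊔ x) := by
      refine le_inf ?_ (le_trans inf_le_right inf_le_right)
      refine le_trans ?_ hdm
      exact le_inf (le_trans inf_le_right inf_le_left) inf_le_left
    rw [compl_inf_bot] at h2
    exact h2
  have := orthomodular x (cᶜ ⊓ (c ⊔ x)) hxy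
  rw [hbot, sup_bot_eq] at this
  exact this.symm

end OML

/-- an OML with the covering property (for every atom `p` and every `x`,
either `p ≤ x` or `x ⋖ x ⊔ p`) is semimodular: `a ⊓ b ⋖ a` implies `b ⋖ a ⊔ b`. -/
theorem coveringProperty_OML_semimodular {α : Type*} [OML α]
    (hcov : ∀ p : α, IsAtom p → ∀ x : α, p ≤ x ∨ x ⋖ x ⊔ p) :
    ∀ a b : α, a ⊓ b ⋖ a → b ⋖ a ⊔ b := by
  intro a b hab
  set c := a ⊓ b with hc
  set p := cᶜ ⊓ a with hp
  have hca : c ≤ a := inf_le_left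
  have hom : c ⊔ p = a := OML.orthomodular c a hca
  have hpc : p ≤ cᶜ := inf_le_left
  have hpne : p ≠ ⊥ := by
    intro h
    rw [h, sup_bot_eq] at hom
    exact hab.lt.ne hom
  have hatom : IsAtom p := by
    constructor
    · exact hpne
    · intro x hx
      by_contra hxbot
      -- x ≤ p, x ≠ ⊥, derive x = p, contradiction with hx.ne
      have hxp : x ≤ p := hx.le
      have hxcc : x ≤ cᶜ := hxp.trans hpc
      have hxc : ¬ x ≤ c := by
        intro h
        apply hxbot
        have : x ≤ c ⊓ cᶜ := le_inf h hxcc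
        rw [OML.inf_compl] at this
        exact le_bot_iff.mp this
      have hlt : c < c ⊔ x := by
        rcases lt_or_eq_of_le (le_sup_left : c ≤ c ⊔ x) with h | h
        · exact h
        · exact absurd (le_sup_right.trans h.symm.le) hxc
      have hle : c ⊔ x ≤ a := sup_le hca ((hxp.trans inf_le_right))
      have heq : c ⊔ x = a := by
        rcases lt_or_eq_of_le hle with h | h
        · exact absurd h (hab.2 hlt)
        · exact h
      have : x = p := by
        rw [hp, ← heq, OML.le_compl_of_inf hxcc]
      exact hx.ne this
  rcases hcov p hatom b with hpb | hcov'
  · exfalso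
    apply hpne
    have : p ≤ c ⊓ cᶜ := le_inf (le_inf inf_le_right hpb) hpc
    rw [OML.inf_compl] at this
    exact le_bot_iff.mp this
  · have heq : b ⊔ p = a ⊔ b := by
      apply le_antisymm
      · exact sup_le le_sup_right (inf_le_right.trans le_sup_left)
      · refine sup_le ?_ le_sup_left
        calc a = c ⊔ p := hom.symm
        _ ≤ b ⊔ p := sup_le_sup_right inf_le_right _
    rwa [heq] at hcov'
end

section
/- Let L be a directly irreducible, algebraic, complete OML with the covering property. Then L is modular and has finite height: the modular law holds in L (for all x ≤ z and all y, x ⊔ (y ⊓ z) = (x ⊔ y) ⊓ z), and there is n ∈ ℕ such that every chain in L has at most n + 1 elements. -/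
namespace OMLProof
set_option linter.unusedSectionVars false
set_option maxHeartbeats 1000000

variable {α : Type*} [CompleteOML α] [DecidableEq α]

open CompleteOML


lemma cc (x : α) : xᶜᶜ = x := compl_compl x
lemma anti {x y : α} (h : x ≤ y) : yᶜ ≤ xᶜ := compl_antitone x y h
lemma ic (x : α) : x ⊓ xᶜ = ⊥ := inf_compl x
lemma sc (x : α) : x ⊔ xᶜ = ⊤ := sup_compl x
lemma om {x y : α} (h : x ≤ y) : x ⊔ (xᶜ ⊓ y) = y := orthomodular x y h

lemma lcc {x y : α} (h : x ≤ yᶜ) : y ≤ xᶜ := by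
  have := anti h; rwa [cc] at this

lemma lcc_iff {x y : α} : x ≤ yᶜ ↔ y ≤ xᶜ := ⟨lcc, lcc⟩

lemma dm_sup (x y : α) : (x ⊔ y)ᶜ = xᶜ ⊓ yᶜ := by
  apply le_antisymm
  · exact le_inf (anti le_sup_left) (anti le_sup_right)
  · apply lcc
    exact sup_le (lcc inf_le_left) (lcc inf_le_right)

lemma dm_inf (x y : α) : (x ⊓ y)ᶜ = xᶜ ⊔ yᶜ := by
  have := dm_sup xᶜ yᶜ
  rw [cc, cc] at this
  rw [← this, cc]

lemma om_dual {x y : α} (h : x ≤ y) : y ⊓ (yᶜ ⊔ x) = x := by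
  have h2 := om (anti h)
  rw [cc] at h2
  have := congrArg (·ᶜ) h2
  simpa [dm_sup, dm_inf, cc] using this

lemma orth_bot {a x : α} (h1 : a ≤ x) (h2 : a ≤ xᶜ) : a = ⊥ :=
  le_bot_iff.mp (ic x ▸ le_inf h1 h2)

lemma cancel {a x : α} (h : a ≤ xᶜ) : xᶜ ⊓ (x ⊔ a) = a := by
  have hau : a ≤ xᶜ ⊓ (x ⊔ a) := le_inf h le_sup_right
  have hv : aᶜ ⊓ (xᶜ ⊓ (x ⊔ a)) = ⊥ := by
    apply le_bot_iff.mp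
    have h1 : aᶜ ⊓ (xᶜ ⊓ (x ⊔ a)) ≤ (x ⊔ a)ᶜ := by
      rw [dm_sup]
      exact le_inf (le_trans inf_le_right inf_le_left) inf_le_left
    have h2 : aᶜ ⊓ (xᶜ ⊓ (x ⊔ a)) ≤ x ⊔ a := le_trans inf_le_right inf_le_right
    rw [← ic (x ⊔ a)]
    exact le_inf h2 h1
  have := om hau
  rw [hv, sup_bot_eq] at this
  exact this.symm

lemma le_compl_sSup {q : α} {S : Set α} : q ≤ (sSup S)ᶜ ↔ ∀ y ∈ S, q ≤ yᶜ := by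
  rw [lcc_iff, sSup_le_iff]
  exact forall₂_congr (fun y _ => lcc_iff)


section cov
variable (halg : IsAlgebraicLattice α)
variable (hcov : ∀ p : α, IsAtom p → ∀ x : α, p ≤ x ∨ x ⋖ x ⊔ p)
variable (hirr : CenterSet α = {⊥, ⊤})

section atoms
include halg

lemma exists_atom_le {x : α} (hx : x ≠ ⊥) : ∃ a : α, IsAtom a ∧ a ≤ x := by
  -- find a nonzero compact element below x
  obtain ⟨c, ⟨hc, hcx⟩, hcb⟩ : ∃ c : α, (IsCompactElement c ∧ c ≤ x) ∧ c ≠ ⊥ := by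
    by_contra h
    push_neg at h
    apply hx
    have := halg x
    rw [this]
    apply le_bot_iff.mp
    apply sSup_le
    intro b hb
    rcases eq_or_ne b ⊥ with rfl | hbne
    · exact le_rfl
    · exact absurd hbne (not_not.mpr (h b hb))
  -- Zorn: maximal element strictly below c
  have hdir := (CompleteLattice.isCompactElement_iff_le_of_directed_sSup_le α c).mp hc
  have hzorn : ∀ ch ⊆ {y : α | y < c}, IsChain (· ≤ ·) ch → ∀ y ∈ ch,
      ∃ ub ∈ {y : α | y < c}, ∀ z ∈ ch, z ≤ ub := by
    intro ch hchsub hch y hy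
    refine ⟨sSup ch, ?_, fun z hz => le_sSup hz⟩
    have hle : sSup ch ≤ c := sSup_le (fun z hz => (hchsub hz).le)
    rcases lt_or_eq_of_le hle with h | h
    · exact h
    · exfalso
      obtain ⟨z, hz, hcz⟩ := hdir ch ⟨y, hy⟩ (IsChain.directedOn hch) (le_of_eq h.symm)
      exact absurd (le_antisymm (hchsub hz).le hcz) (ne_of_lt (hchsub hz))
  obtain ⟨m, _, hm⟩ := zorn_le_nonempty₀ {y : α | y < c} hzorn ⊥ (bot_lt_iff_ne_bot.mpr hcb)
  -- a := mᶜ ⊓ c is an atom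
  have hmc : m < c := hm.prop
  refine ⟨mᶜ ⊓ c, ⟨?_, ?_⟩, le_trans inf_le_right hcx⟩
  · intro hbot
    have := om hmc.le
    rw [hbot, sup_bot_eq] at this
    exact absurd this (ne_of_lt hmc)
  · intro b hb
    have hbm : b ≤ mᶜ := le_trans hb.le inf_le_left
    have hbc : m ⊔ b ≤ c := sup_le hmc.le (le_trans hb.le inf_le_right)
    rcases lt_or_eq_of_le hbc with h | h
    · have : m ⊔ b = m := (hm.eq_of_ge (y := m ⊔ b) h le_sup_left)
      have hbm' : b ≤ m := le_sup_right.trans this.le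
      exact orth_bot hbm' hbm
    · have : mᶜ ⊓ (m ⊔ b) = b := cancel hbm
      rw [h] at this
      exact absurd this.symm (ne_of_lt hb)

lemma atom_compact {a : α} (ha : IsAtom a) : IsCompactElement a := by
  by_contra h
  have := halg a
  have hall : ∀ c : α, IsCompactElement c ∧ c ≤ a → c = ⊥ := by
    intro c ⟨hc, hca⟩
    rcases lt_or_eq_of_le hca with h' | rfl
    · exact ha.2 c h'
    · exact absurd hc h
  apply ha.1
  rw [this]
  exact le_bot_iff.mp (sSup_le (fun b hb => (hall b hb).le))

lemma atomistic (x : α) : sSup {a : α | IsAtom a ∧ a ≤ x} = x := by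
  set s := sSup {a : α | IsAtom a ∧ a ≤ x} with hs
  have hsx : s ≤ x := sSup_le (fun a ha => ha.2)
  have hy : sᶜ ⊓ x = ⊥ := by
    by_contra hy
    obtain ⟨a, ha, hay⟩ := exists_atom_le halg hy
    have hax : a ≤ x := hay.trans inf_le_right
    have has : a ≤ s := le_sSup ⟨ha, hax⟩
    exact ha.1 (orth_bot has (by rw [← cc s] at hay ⊢; exact hay.trans inf_le_left))
  have := om hsx
  rw [hy, sup_bot_eq] at this
  exact this

lemma exists_atom_le_not_le {x y : α} (h : x < y) :
    ∃ a : α, IsAtom a ∧ a ≤ y ∧ ¬ a ≤ x := by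
  by_contra hc
  push_neg at hc
  apply absurd (le_antisymm h.le ?_) (ne_of_lt h)
  conv_lhs => rw [← atomistic halg y]
  apply sSup_le
  intro a ⟨ha, hay⟩
  exact hc a ha hay


end atoms

include hcov in
/-- exchange: if `q ≤ x ⊔ p`, `q ≰ x`, `p` an atom, then `x ⊔ q = x ⊔ p`. -/
lemma exchange {x p q : α} (hp : IsAtom p) (hq : q ≤ x ⊔ p) (hqx : ¬ q ≤ x) :
    x ⊔ q = x ⊔ p := by
  rcases hcov p hp x with h | h
  · rw [sup_of_le_left h] at hq; exact absurd hq hqx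
  · rcases h.eq_or_eq (le_sup_left : x ≤ x ⊔ q) (sup_le (le_sup_left) hq) with h' | h'
    · exact absurd (le_sup_right.trans h'.le) hqx
    · exact h'

include hcov in
/-- the relative atom `xᶜ ⊓ (x ⊔ p)`. -/
lemma rel_atom {x p : α} (hp : IsAtom p) (hpx : ¬ p ≤ x) :
    IsAtom (xᶜ ⊓ (x ⊔ p)) ∧ x ⊔ (xᶜ ⊓ (x ⊔ p)) = x ⊔ p ∧ xᶜ ⊓ (x ⊔ p) ≤ xᶜ := by
  have hcv : x ⋖ x ⊔ p := by
    rcases hcov p hp x with h | h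
    · exact absurd h hpx
    · exact h
  have hom : x ⊔ (xᶜ ⊓ (x ⊔ p)) = x ⊔ p := om le_sup_left
  refine ⟨⟨?_, ?_⟩, hom, inf_le_left⟩
  · intro hbot
    rw [hbot, sup_bot_eq] at hom
    exact hpx (le_sup_right.trans hom.ge)
  · intro b hb
    have hbx : b ≤ xᶜ := hb.le.trans inf_le_left
    have : xᶜ ⊓ (x ⊔ b) = b := cancel hbx
    rcases hcv.eq_or_eq (le_sup_left : x ≤ x ⊔ b)
        (sup_le le_sup_left (hb.le.trans inf_le_right)) with h' | h'
    · rw [h'] at this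
      have hbx2 : b ≤ x := this ▸ inf_le_right
      exact orth_bot hbx2 hbx
    · rw [h'] at this
      exact absurd this (Ne.symm (ne_of_lt hb))

include hcov in
/-- Steinitz-type exchange for finite sets of atoms. -/
lemma finset_exchange : ∀ (s : Finset α), (∀ a ∈ s, IsAtom a) → ∀ x q : α,
    q ≤ x ⊔ s.sup id → ¬ q ≤ x → ∃ a ∈ s, a ≤ (x ⊔ q) ⊔ (s.erase a).sup id := by
  intro s
  induction s using Finset.induction_on with
  | empty =>
    intro _ x q hq hqx
    rw [Finset.sup_empty, sup_bot_eq] at hq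
    exact absurd hq hqx
  | @insert a s' ha ih =>
    intro hat x q hq hqx
    by_cases hq' : q ≤ x ⊔ s'.sup id
    · obtain ⟨b, hb, hble⟩ := ih (fun a ha => hat a (Finset.mem_insert_of_mem ha)) x q hq' hqx
      refine ⟨b, Finset.mem_insert_of_mem hb, hble.trans (sup_le_sup_left ?_ _)⟩
      apply Finset.sup_mono
      rw [Finset.erase_insert_of_ne (by rintro rfl; exact ha hb)]
      exact Finset.subset_insert _ _
    · rw [Finset.sup_insert] at hq
      have hq2 : q ≤ (x ⊔ s'.sup id) ⊔ a := by
        have heq : x ⊔ (id a ⊔ s'.sup id) = (x ⊔ s'.sup id) ⊔ a := by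
          rw [← sup_assoc, sup_right_comm]; rfl
        exact hq.trans heq.le
      have hx := exchange hcov (x := x ⊔ s'.sup id)
        (hat a (Finset.mem_insert_self a s')) hq2 hq'
      refine ⟨a, Finset.mem_insert_self a s', ?_⟩
      rw [Finset.erase_insert ha]
      calc a ≤ (x ⊔ s'.sup id) ⊔ q := hx.symm ▸ le_sup_right
        _ ≤ (x ⊔ q) ⊔ s'.sup id := by rw [sup_right_comm]

include halg hcov in
/-- chain-length bound: a strictly increasing list inside `[x, x ⊔ sup s]` has length
at most `s.card + 1`. -/
lemma chain_list_bound : ∀ (l : List α) (s : Finset α) (x : α), (∀ a ∈ s, IsAtom a) →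
    l.IsChain (· < ·) → (∀ y ∈ l, x ≤ y ∧ y ≤ x ⊔ s.sup id) → l.length ≤ s.card + 1 := by
  intro l
  induction l with
  | nil => intro s x _ _ _; simp
  | cons y0 l ih =>
    intro s x hat hch hmem
    match l, hch with
    | [], _ => simp
    | y1 :: rest, hch =>
      have h01 : y0 < y1 := (List.isChain_cons_cons.mp hch).1
      obtain ⟨q, hq, hqy1, hqy0⟩ := exists_atom_le_not_le halg h01
      have hqle : q ≤ y0 ⊔ s.sup id :=
        hqy1.trans ((hmem y1 (by simp)).2.trans (sup_le_sup_right (hmem y0 (by simp)).1 _))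
      obtain ⟨a, has, hale⟩ := finset_exchange hcov s hat y0 q hqle hqy0
      have hkey : ∀ y ∈ y1 :: rest, y1 ≤ y ∧ y ≤ y1 ⊔ (s.erase a).sup id := by
        have hpw := (List.isChain_iff_pairwise.mp hch)
        intro y hy
        constructor
        · rcases List.mem_cons.mp hy with rfl | hy
          · exact le_rfl
          · exact (List.rel_of_pairwise_cons (List.pairwise_cons.mp hpw).2 hy).le
        · have hyx : y ≤ x ⊔ s.sup id := (hmem y (List.mem_cons_of_mem _ hy)).2
          have hdecomp : x ⊔ s.sup id ≤ y1 ⊔ (s.erase a).sup id := by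
            have hs : s.sup id = a ⊔ (s.erase a).sup id := by
              conv_lhs => rw [← Finset.insert_erase has]
              rw [Finset.sup_insert]; rfl
            rw [hs]
            have hx1 : x ≤ y1 := (hmem y0 (by simp)).1.trans h01.le
            have ha1 : a ≤ y1 ⊔ (s.erase a).sup id := by
              refine hale.trans ?_
              have : (y0 ⊔ q) ≤ y1 := sup_le h01.le hqy1
              exact sup_le_sup_right this _
            exact sup_le (hx1.trans le_sup_left) (sup_le ha1 le_sup_right)
          exact hyx.trans hdecomp
      have := ih (s.erase a) y1 (fun b hb => hat b (Finset.mem_of_mem_erase hb))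
        (List.IsChain.tail hch) hkey
      have hcard : (s.erase a).card < s.card := Finset.card_erase_lt_of_mem has
      simp only [List.length_cons] at this ⊢
      omega

/-- a nonempty finite chain has a least element. -/
lemma chain_min : ∀ (t : Finset α), t.Nonempty → IsChain (· ≤ ·) (↑t : Set α) →
    ∃ m ∈ t, ∀ y ∈ t, m ≤ y := by
  intro t
  induction t using Finset.induction_on with
  | empty => rintro ⟨x, hx⟩; simp at hx
  | @insert a s' ha ih =>
    intro _ hch
    rcases s'.eq_empty_or_nonempty with rfl | hne'
    · exact ⟨a, by simp, by simp⟩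
    · obtain ⟨m', hm', hmle⟩ := ih hne' (hch.mono (by simp [Set.subset_def]; tauto))
      have hcomp : a ≤ m' ∨ m' ≤ a := by
        rcases eq_or_ne a m' with rfl | hne
        · exact Or.inl le_rfl
        · rcases hch (by simp) (by simp [hm']) hne with h | h
          · exact Or.inl h
          · exact Or.inr h
      rcases hcomp with h | h
      · exact ⟨a, by simp, fun y hy => by
          rcases Finset.mem_insert.mp hy with rfl | hy
          · exact le_rfl
          · exact h.trans (hmle y hy)⟩
      · exact ⟨m', Finset.mem_insert_of_mem hm', fun y hy => by
          rcases Finset.mem_insert.mp hy with rfl | hy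
          · exact h
          · exact hmle y hy⟩

/-- a finite chain can be sorted into a strictly increasing list. -/
lemma chain_sorted : ∀ (t : Finset α), IsChain (· ≤ ·) (↑t : Set α) →
    ∃ l : List α, l.IsChain (· < ·) ∧ l.length = t.card ∧ ∀ z ∈ l, z ∈ t := by
  intro t
  induction t using Finset.strongInduction with
  | _ t ih =>
    rcases t.eq_empty_or_nonempty with rfl | hne
    · exact fun _ => ⟨[], by simp⟩
    · intro hch
      obtain ⟨m, hm, hmle⟩ := chain_min t hne hch
      have herase : t.erase m ⊂ t := Finset.erase_ssubset hm
      obtain ⟨l', hl', hlen', hmem'⟩ := ih (t.erase m) herase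
        (hch.mono (by simp [Set.subset_def, Finset.mem_erase]; tauto))
      refine ⟨m :: l', ?_, ?_, ?_⟩
      · rw [List.isChain_cons]
        refine ⟨?_, hl'⟩
        intro y hy
        have hyt : y ∈ t.erase m := hmem' y (List.mem_of_mem_head? hy)
        exact lt_of_le_of_ne (hmle y (Finset.mem_of_mem_erase hyt))
          (Ne.symm (Finset.ne_of_mem_erase hyt))
      · have hpos : 0 < t.card := Finset.card_pos.mpr hne
        simp only [List.length_cons, hlen', Finset.card_erase_of_mem hm]
        omega
      · intro z hz
        rcases List.mem_cons.mp hz with rfl | hz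
        · exact hm
        · exact Finset.mem_of_mem_erase (hmem' z hz)
/-- `x` is generated by the finite set of atoms `s`. -/
def AtomGen (s : Finset α) (x : α) : Prop := (∀ a ∈ s, IsAtom a) ∧ s.sup id = x

/-- `x` is a finite join of atoms. -/
def Gen (x : α) : Prop := ∃ s : Finset α, AtomGen s x

/-- rank: minimal number of atoms generating `x`. -/
noncomputable def d (x : α) : ℕ := sInf {n | ∃ s : Finset α, AtomGen s x ∧ s.card = n}

lemma d_spec {x : α} (hx : Gen x) : ∃ s : Finset α, AtomGen s x ∧ s.card = d x := by
  have hne : {n | ∃ s : Finset α, AtomGen s x ∧ s.card = n}.Nonempty := by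
    obtain ⟨s, hs⟩ := hx; exact ⟨s.card, s, hs, rfl⟩
  exact Nat.sInf_mem hne

lemma d_le {s : Finset α} {x : α} (h : AtomGen s x) : d x ≤ s.card :=
  Nat.sInf_le ⟨s, h, rfl⟩

lemma gen_bot : Gen (⊥ : α) := ⟨∅, by simp, by simp⟩

lemma gen_atom {a : α} (ha : IsAtom a) : Gen a := ⟨{a}, by simpa using ha, by simp⟩

lemma d_bot : d (⊥ : α) = 0 :=
  Nat.le_zero.mp (d_le (⟨by simp, by simp⟩ : AtomGen (∅ : Finset α) ⊥))

lemma eq_bot_of_d_zero {x : α} (hx : Gen x) (h : d x = 0) : x = ⊥ := by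
  obtain ⟨s, hs, hcard⟩ := d_spec hx
  rw [h] at hcard
  rw [← hs.2, Finset.card_eq_zero.mp hcard]
  simp

lemma d_atom {a : α} (ha : IsAtom a) : d a = 1 := by
  refine le_antisymm (by simpa using d_le (⟨by simpa using ha, by simp⟩ :
    AtomGen ({a} : Finset α) a)) ?_
  rcases Nat.eq_zero_or_pos (d a) with h | h
  · exact absurd (eq_bot_of_d_zero (gen_atom ha) h) ha.1
  · exact h

lemma gen_sup {x y : α} (hx : Gen x) (hy : Gen y) : Gen (x ⊔ y) := by
  obtain ⟨s, hs⟩ := hx; obtain ⟨t, ht⟩ := hy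
  exact ⟨s ∪ t, fun a ha => (Finset.mem_union.mp ha).elim (hs.1 a) (ht.1 a),
    by rw [Finset.sup_union, hs.2, ht.2]⟩

lemma d_subadd {x y : α} (hx : Gen x) (hy : Gen y) : d (x ⊔ y) ≤ d x + d y := by
  obtain ⟨s, hs, hsc⟩ := d_spec hx
  obtain ⟨t, ht, htc⟩ := d_spec hy
  have : AtomGen (s ∪ t) (x ⊔ y) :=
    ⟨fun a ha => (Finset.mem_union.mp ha).elim (hs.1 a) (ht.1 a),
      by rw [Finset.sup_union, hs.2, ht.2]⟩
  exact (d_le this).trans (by rw [← hsc, ← htc]; exact Finset.card_union_le s t)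

include halg hcov in
lemma chain_le_gen {y : α} (hy : Gen y) {l : List α} (hch : l.IsChain (· < ·))
    (hbd : ∀ z ∈ l, z ≤ y) : l.length ≤ d y + 1 := by
  obtain ⟨s, hs, hsc⟩ := d_spec hy
  rw [← hsc]
  apply chain_list_bound halg hcov l s ⊥ hs.1 hch
  intro z hz
  exact ⟨bot_le, by rw [bot_sup_eq, hs.2]; exact hbd z hz⟩

lemma gen_erase {s : Finset α} {x a : α} (hs : AtomGen s x) (hsc : s.card = d x)
    (ha : a ∈ s) :
    Gen ((s.erase a).sup id) ∧ (s.erase a).sup id < x ∧ d ((s.erase a).sup id) + 1 = d x := by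
  set x' := (s.erase a).sup id with hx'
  have hgen' : AtomGen (s.erase a) x' := ⟨fun b hb => hs.1 b (Finset.mem_of_mem_erase hb), rfl⟩
  have hlt : x' ≤ x := by rw [← hs.2]; exact Finset.sup_mono (Finset.erase_subset a s)
  have hne : x' ≠ x := by
    intro h
    have : d x ≤ (s.erase a).card := h ▸ d_le hgen'
    rw [Finset.card_erase_of_mem ha, hsc] at this
    have hpos : 0 < d x := by
      rw [← hsc]; exact Finset.card_pos.mpr ⟨a, ha⟩
    omega
  have hsub : d x ≤ d x' + 1 := by
    have : x = x' ⊔ a := by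
      rw [← hs.2]
      conv_lhs => rw [← Finset.insert_erase ha]
      rw [Finset.sup_insert, sup_comm]; rfl
    rw [this]
    have := d_subadd (x := x') (y := a) ⟨_, hgen'⟩ (gen_atom (hs.1 a ha))
    rw [d_atom (hs.1 a ha)] at this
    exact this
  have hle : d x' ≤ d x - 1 := by
    have := d_le hgen'
    rw [Finset.card_erase_of_mem ha, hsc] at this
    exact this
  refine ⟨⟨_, hgen'⟩, lt_of_le_of_ne hlt hne, ?_⟩
  have hpos : 0 < d x := by rw [← hsc]; exact Finset.card_pos.mpr ⟨a, ha⟩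
  omega

/-- there is a strictly increasing list of length `d x + 1` ending at `x`. -/
lemma exists_chain : ∀ (n : ℕ) (x : α), Gen x → d x = n →
    ∃ l : List α, l.IsChain (· < ·) ∧ l.length = d x + 1 ∧ l.getLast? = some x ∧
      ∀ z ∈ l, z ≤ x := by
  intro n
  induction n with
  | zero =>
    intro x hx hn
    have := eq_bot_of_d_zero hx hn
    subst this
    exact ⟨[⊥], by simp, by simp [hn], by simp, by simp⟩
  | succ n ih =>
    intro x hx hn
    obtain ⟨s, hs, hsc⟩ := d_spec hx
    have hne : s.Nonempty := by
      rw [← Finset.card_pos, hsc, hn]; omega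
    obtain ⟨a, ha⟩ := hne
    obtain ⟨hgen', hlt, hd'⟩ := gen_erase hs hsc ha
    have hd'n : d ((s.erase a).sup id) = n := by omega
    obtain ⟨l', hch', hlen', hlast', hmem'⟩ := ih _ hgen' hd'n
    refine ⟨l' ++ [x], ?_, by simp [hlen', hd'n, hn], by simp, ?_⟩
    · rw [List.isChain_append]
      refine ⟨hch', by simp, ?_⟩
      intro z hz y hy
      simp at hy
      subst hy
      rw [hlast'] at hz
      simp at hz
      subst hz
      exact hlt
    · intro z hz
      rcases List.mem_append.mp hz with hz | hz
      · exact (hmem' z hz).trans hlt.le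
      · simp at hz; subst hz; exact le_rfl

include halg hcov in
lemma d_mono {x y : α} (hx : Gen x) (hy : Gen y) (hxy : x ≤ y) : d x ≤ d y := by
  obtain ⟨l, hch, hlen, _, hmem⟩ := exists_chain (d x) x hx rfl
  have := chain_le_gen halg hcov hy hch (fun z hz => (hmem z hz).trans hxy)
  omega

include halg hcov in
lemma d_strictMono {x y : α} (hx : Gen x) (hy : Gen y) (hxy : x < y) : d x < d y := by
  obtain ⟨l, hch, hlen, hlast, hmem⟩ := exists_chain (d x) x hx rfl
  have hch2 : (l ++ [y]).IsChain (· < ·) := by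
    rw [List.isChain_append]
    refine ⟨hch, by simp, ?_⟩
    intro z hz w hw
    simp at hw; subst hw
    rw [hlast] at hz; simp at hz; subst hz
    exact hxy
  have := chain_le_gen halg hcov hy hch2 (fun z hz => by
    rcases List.mem_append.mp hz with hz | hz
    · exact (hmem z hz).trans hxy.le
    · simp at hz; subst hz; exact le_rfl)
  simp [hlen] at this
  omega

include halg hcov in
lemma eq_of_le_of_d_ge {x y : α} (hx : Gen x) (hy : Gen y) (hxy : x ≤ y)
    (hd : d y ≤ d x) : x = y := by
  rcases lt_or_eq_of_le hxy with h | h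
  · exact absurd (d_strictMono halg hcov hx hy h) (by omega)
  · exact h

include halg hcov in
/-- orthogonal additivity of rank. -/
lemma d_ortho : ∀ (n : ℕ) (x y : α), Gen x → Gen y → y ≤ xᶜ → d y = n →
    d (x ⊔ y) = d x + d y := by
  intro n
  induction n with
  | zero =>
    intro x y hx hy _ hn
    rw [eq_bot_of_d_zero hy hn, sup_bot_eq, d_bot]
    omega
  | succ n ih =>
    intro x y hx hy hyx hn
    obtain ⟨t, ht, htc⟩ := d_spec hy
    have hne : t.Nonempty := by rw [← Finset.card_pos, htc, hn]; omega
    obtain ⟨a, ha⟩ := hne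
    obtain ⟨hgen', hlt, hd'⟩ := gen_erase ht htc ha
    set y' := (t.erase a).sup id with hy'
    have hd'n : d y' = n := by omega
    have hy'c : y' ≤ xᶜ := hlt.le.trans hyx
    have hIH : d (x ⊔ y') = d x + n := by rw [ih x y' hx hgen' hy'c hd'n, hd'n]
    have hstrict : x ⊔ y' < x ⊔ y := by
      refine lt_of_le_of_ne (sup_le_sup_left hlt.le x) ?_
      intro h
      have hyy' : y ≤ y' := by
        have h1 : y ≤ x ⊔ y' := h ▸ le_sup_right
        have h2 : xᶜ ⊓ (x ⊔ y') = y' := cancel hy'c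
        exact h2 ▸ le_inf hyx h1
      have : y = y' := le_antisymm hyy' hlt.le
      rw [this, hd'n] at hn; omega
    have h1 : d (x ⊔ y') < d (x ⊔ y) :=
      d_strictMono halg hcov (gen_sup hx hgen') (gen_sup hx hy) hstrict
    have h2 : d (x ⊔ y) ≤ d x + d y := d_subadd hx hy
    omega

include halg hcov in
/-- relative generation: rank difference realized by a finite set of atoms. -/
lemma rel_gen {u v : α} (hu : Gen u) (hv : Gen v) (huv : u ≤ v) :
    ∃ t : Finset α, (∀ a ∈ t, IsAtom a) ∧ u ⊔ t.sup id = v ∧ d u + t.card = d v := by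
  classical
  set S := {n | ∃ t : Finset α, (∀ a ∈ t, IsAtom a) ∧ u ⊔ t.sup id = v ∧ t.card = n} with hS
  have hSne : S.Nonempty := by
    obtain ⟨s, hs⟩ := hv
    exact ⟨s.card, s, hs.1, by rw [hs.2]; exact sup_eq_right.mpr huv, rfl⟩
  obtain ⟨t, hta, htv, htc⟩ := Nat.sInf_mem hSne
  -- t has the no-drop property
  have hnodrop : ∀ a ∈ t, ¬ a ≤ u ⊔ (t.erase a).sup id := by
    intro a ha hle
    have hv' : u ⊔ (t.erase a).sup id = v := by
      apply le_antisymm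
      · rw [← htv]
        exact sup_le_sup_left (Finset.sup_mono (Finset.erase_subset a t)) u
      · rw [← htv]
        apply sup_le le_sup_left
        apply Finset.sup_le
        intro b hb
        rcases eq_or_ne b a with rfl | hne
        · exact hle
        · exact le_sup_right.trans' (Finset.le_sup (Finset.mem_erase.mpr ⟨hne, hb⟩))
    have : sInf S ≤ (t.erase a).card :=
      Nat.sInf_le ⟨t.erase a, fun b hb => hta b (Finset.mem_of_mem_erase hb), hv', rfl⟩
    rw [← htc] at this
    rw [Finset.card_erase_of_mem ha] at this
    have : 0 < t.card := Finset.card_pos.mpr ⟨a, ha⟩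
    omega
  -- lower bound by induction: d v ≥ d u + t.card
  have hlb : ∀ (m : ℕ) (t' : Finset α), t'.card = m → (∀ a ∈ t', IsAtom a) →
      (∀ a ∈ t', ¬ a ≤ u ⊔ (t'.erase a).sup id) → d u + t'.card ≤ d (u ⊔ t'.sup id) := by
    intro m
    induction m with
    | zero =>
      intro t' hc _ _
      rw [Finset.card_eq_zero.mp hc]
      simp
    | succ m ih =>
      intro t' hc hat hnd
      have hne : t'.Nonempty := by rw [← Finset.card_pos, hc]; omega
      obtain ⟨a, ha⟩ := hne
      have hd1 : ∀ b ∈ t'.erase a, ¬ b ≤ u ⊔ ((t'.erase a).erase b).sup id := by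
        intro b hb hle
        apply hnd b (Finset.mem_of_mem_erase hb)
        refine hle.trans (sup_le_sup_left (Finset.sup_mono ?_) u)
        intro c hc
        simp only [Finset.mem_erase] at hc ⊢
        exact ⟨hc.1, hc.2.2⟩
      have hIH := ih (t'.erase a) (by rw [Finset.card_erase_of_mem ha, hc]; rfl)
        (fun b hb => hat b (Finset.mem_of_mem_erase hb)) hd1
      have hstrict : u ⊔ (t'.erase a).sup id < u ⊔ t'.sup id := by
        refine lt_of_le_of_ne (sup_le_sup_left (Finset.sup_mono (Finset.erase_subset a t')) u) ?_
        intro h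
        apply hnd a ha
        rw [h]
        exact le_trans (Finset.le_sup (f := id) ha) le_sup_right
      have hgen1 : Gen (u ⊔ (t'.erase a).sup id) :=
        gen_sup hu ⟨t'.erase a, fun b hb => hat b (Finset.mem_of_mem_erase hb), rfl⟩
      have hgen2 : Gen (u ⊔ t'.sup id) := gen_sup hu ⟨t', hat, rfl⟩
      have := d_strictMono halg hcov hgen1 hgen2 hstrict
      rw [Finset.card_erase_of_mem ha] at hIH
      have hpos : 0 < t'.card := Finset.card_pos.mpr ⟨a, ha⟩
      omega
  have hub : d v ≤ d u + t.card := by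
    rw [← htv]
    obtain ⟨s, hsgen, hsc⟩ := d_spec hu
    have : AtomGen (s ∪ t) (u ⊔ t.sup id) :=
      ⟨fun b hb => (Finset.mem_union.mp hb).elim (hsgen.1 b) (hta b),
        by rw [Finset.sup_union, hsgen.2]⟩
    exact (d_le this).trans (le_trans (Finset.card_union_le s t) (by omega))
  have hlb' := hlb t.card t rfl hta hnodrop
  rw [htv] at hlb'
  exact ⟨t, hta, htv, by omega⟩

include halg in
/-- every element with bounded chains is a finite join of atoms. -/
lemma gen_of_bounded : ∀ (k : ℕ) (x : α),
    (∀ l : List α, l.IsChain (· < ·) → (∀ z ∈ l, z ≤ x) → l.length ≤ k) → Gen x := by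
  intro k
  induction k with
  | zero =>
    intro x hbd
    have := hbd [x] (by simp) (by simp)
    simp at this
  | succ k ih =>
    intro x hbd
    rcases eq_or_ne x ⊥ with rfl | hx
    · exact gen_bot
    · obtain ⟨a, ha, hax⟩ := exists_atom_le halg hx
      set r := aᶜ ⊓ x with hr
      have hrx : r < x := by
        refine lt_of_le_of_ne inf_le_right ?_
        intro h
        apply ha.1
        have : a ≤ aᶜ := hax.trans (h ▸ inf_le_left)
        exact le_bot_iff.mp ((le_inf le_rfl this).trans (CompleteOML.inf_compl a).le)
      have hrb : ∀ l : List α, l.IsChain (· < ·) → (∀ z ∈ l, z ≤ r) → l.length ≤ k := by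
        intro l hch hmem
        have := hbd (l ++ [x]) ?_ ?_
        · simp at this; omega
        · rw [List.isChain_append]
          refine ⟨hch, by simp, ?_⟩
          intro z hz w hw
          simp at hw; subst hw
          exact lt_of_le_of_lt (hmem z (List.mem_of_mem_getLast? hz)) hrx
        · intro z hz
          rcases List.mem_append.mp hz with hz | hz
          · exact (hmem z hz).trans hrx.le
          · simp at hz; subst hz; exact le_rfl
      have hgenr : Gen r := ih r hrb
      have : a ⊔ r = x := om hax
      rw [← this]
      exact gen_sup (gen_atom ha) hgenr

include halg hcov in
lemma gen_of_le {c x : α} (hc : Gen c) (hxc : x ≤ c) : Gen x := by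
  apply gen_of_bounded halg (d c + 1)
  intro l hch hmem
  exact chain_le_gen halg hcov hc hch (fun z hz => (hmem z hz).trans hxc)


include halg hcov in
lemma d_ortho_add {x y : α} (hx : Gen x) (hy : Gen y) (h : y ≤ xᶜ) :
    d (x ⊔ y) = d x + d y := d_ortho halg hcov (d y) x y hx hy h rfl

section all
variable (hall : ∀ x : α, Gen x)

include halg hcov hall in
lemma d_submod (x y : α) : d (x ⊔ y) + d (x ⊓ y) ≤ d x + d y := by
  obtain ⟨t, hta, htv, htc⟩ := rel_gen halg hcov (hall (x ⊓ y)) (hall y) inf_le_right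
  have hxy : x ⊔ y = x ⊔ t.sup id := by
    conv_lhs => rw [← htv]
    rw [← sup_assoc, sup_inf_self]
  have h1 : d (x ⊔ y) ≤ d x + t.card := by
    rw [hxy]
    exact (d_subadd (hall x) ⟨t, hta, rfl⟩).trans
      (by have := d_le (⟨hta, rfl⟩ : AtomGen t (t.sup id)); omega)
  omega

include halg hcov hall in
lemma d_compl_add (x : α) : d x + d xᶜ = d (⊤ : α) := by
  have := d_ortho_add halg hcov (hall x) (hall xᶜ) (le_refl xᶜ)
  rw [sc] at this
  omega

include halg hcov hall in
lemma d_mod (x y : α) : d (x ⊔ y) + d (x ⊓ y) = d x + d y := by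
  refine le_antisymm (d_submod halg hcov hall x y) ?_
  have h := d_submod halg hcov hall xᶜ yᶜ
  rw [← dm_inf, ← dm_sup] at h
  have e1 := d_compl_add halg hcov hall x
  have e2 := d_compl_add halg hcov hall y
  have e3 := d_compl_add halg hcov hall (x ⊓ y)
  have e4 := d_compl_add halg hcov hall (x ⊔ y)
  omega

include halg hcov hall in
lemma modular_law (x y z : α) (hxz : x ≤ z) : x ⊔ (y ⊓ z) = (x ⊔ y) ⊓ z := by
  have hle : x ⊔ (y ⊓ z) ≤ (x ⊔ y) ⊓ z :=
    sup_le (le_inf le_sup_left hxz) (inf_le_inf (le_sup_right) le_rfl)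
  apply eq_of_le_of_d_ge halg hcov (hall _) (hall _) hle
  have e1 := d_mod halg hcov hall x (y ⊓ z)
  have e2 := d_mod halg hcov hall (x ⊔ y) z
  have e3 := d_mod halg hcov hall x y
  have e4 := d_mod halg hcov hall y z
  have r1 : x ⊓ (y ⊓ z) = x ⊓ y := by
    rw [← inf_assoc, inf_comm x y, inf_assoc, inf_eq_left.mpr hxz, inf_comm]
  have r2 : x ⊔ y ⊔ z = y ⊔ z := by
    rw [sup_comm x y, sup_assoc, sup_eq_right.mpr hxz]
  rw [r1] at e1
  rw [r2] at e2
  omega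


end all

lemma atom_le_atom {p b : α} (hp : IsAtom p) (hb : IsAtom b) (h : p ≤ b) : p = b := by
  rcases lt_or_eq_of_le h with h' | h'
  · exact absurd (hb.2 p h') hp.1
  · exact h'

lemma atom_not_le {p q : α} (hp : IsAtom p) (hq : IsAtom q) (hne : p ≠ q) : ¬ p ≤ q :=
  fun h => hne (atom_le_atom hp hq h)

/-- perspectivity of atoms: equal or a third atom under the join. -/
def Persp (p q : α) : Prop :=
  p = q ∨ ∃ c : α, IsAtom c ∧ c ≤ p ⊔ q ∧ c ≠ p ∧ c ≠ q

lemma persp_refl (p : α) : Persp p p := Or.inl rfl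

lemma persp_symm {p q : α} (h : Persp p q) : Persp q p := by
  rcases h with rfl | ⟨c, hc, hle, hcp, hcq⟩
  · exact Or.inl rfl
  · exact Or.inr ⟨c, hc, by rwa [sup_comm], hcq, hcp⟩

include hcov in
lemma nonpersp_orth {p q : α} (hp : IsAtom p) (hq : IsAtom q) (hne : p ≠ q)
    (h : ¬ Persp p q) : q ≤ pᶜ := by
  have hqp : ¬ q ≤ p := atom_not_le hq hp (Ne.symm hne)
  obtain ⟨hratom, hreq, hrle⟩ := rel_atom hcov hq hqp
  set r := pᶜ ⊓ (p ⊔ q) with hr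
  have hrp : r ≠ p := by
    intro h'
    exact hp.1 (orth_bot le_rfl (h' ▸ hrle))
  have hrq : r = q := by
    by_contra hrq
    exact h (Or.inr ⟨r, hratom, inf_le_right, hrp, hrq⟩)
  exact hrq ▸ hrle

include halg hcov in
lemma d_two {p q : α} (hp : IsAtom p) (hq : IsAtom q) (hne : p ≠ q) : d (p ⊔ q) = 2 := by
  have hgen : AtomGen ({p, q} : Finset α) (p ⊔ q) := by
    constructor
    · intro a ha
      rcases Finset.mem_insert.mp ha with rfl | ha
      · exact hp
      · rw [Finset.mem_singleton.mp ha]; exact hq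
    · rw [Finset.sup_insert, Finset.sup_singleton]; rfl
  have hle : d (p ⊔ q) ≤ 2 := le_trans (d_le hgen) (by simpa using Finset.card_insert_le p ({q} : Finset α))
  have hGen : Gen (p ⊔ q) := ⟨_, hgen⟩
  interval_cases h : d (p ⊔ q)
  · exact absurd (le_sup_left.trans (eq_bot_of_d_zero hGen h).le) (by simpa using hp.1)
  · obtain ⟨s, hs, hsc⟩ := d_spec hGen
    rw [h] at hsc
    obtain ⟨b, rfl⟩ := Finset.card_eq_one.mp hsc
    have hbatom : IsAtom b := hs.1 b (by simp)
    have hbeq : b = p ⊔ q := by simpa using hs.2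
    have h1 : p = b := atom_le_atom hp hbatom (hbeq ▸ le_sup_left)
    have h2 : q = b := atom_le_atom hq hbatom (hbeq ▸ le_sup_right)
    exact absurd (h1.trans h2.symm) hne
  · rfl

include halg hcov in
lemma persp_trans {p q r : α} (hp : IsAtom p) (hq : IsAtom q) (hr : IsAtom r)
    (h1 : Persp p q) (h2 : Persp q r) : Persp p r := by
  rcases h1 with rfl | ⟨x, hx, hxle, hxp, hxq⟩
  · exact h2
  rcases h2 with rfl | ⟨y, hy, hyle, hyq, hyr⟩
  · exact Or.inr ⟨x, hx, hxle, hxp, hxq⟩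
  rcases eq_or_ne p r with rfl | hpr
  · exact persp_refl p
  have hpq : p ≠ q := by
    rintro rfl
    exact hxp (atom_le_atom hx hp (by simpa using hxle))
  have hqr : q ≠ r := by
    rintro rfl
    exact hyq (atom_le_atom hy hq (by simpa using hyle))
  set P := p ⊔ q ⊔ r with hP
  have hgenP : Gen P := gen_sup (gen_sup (gen_atom hp) (gen_atom hq)) (gen_atom hr)
  have hprP : p ⊔ r ≤ P := sup_le (le_sup_left.trans le_sup_left) le_sup_right
  have hqP : q ≤ P := le_sup_left.trans' le_sup_right
  have hdpr : d (p ⊔ r) = 2 := d_two halg hcov hp hr hpr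
  have hdP3 : d P ≤ 3 := by
    have h1 : d (p ⊔ q) ≤ 2 := (d_two halg hcov hp hq hpq).le
    have := d_subadd (gen_sup (gen_atom hp) (gen_atom hq)) (gen_atom hr)
    rw [d_atom hr, ← hP] at this
    omega
  by_cases hdP : d P ≤ 2
  · -- degenerate case: P = p ⊔ r
    have : p ⊔ r = P := by
      apply eq_of_le_of_d_ge halg hcov (gen_sup (gen_atom hp) (gen_atom hr)) hgenP hprP
      omega
    exact Or.inr ⟨q, hq, this ▸ hqP, Ne.symm hpq, hqr⟩
  · have hdP3' : d P = 3 := by omega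
    -- x ≠ y
    have hxy : x ≠ y := by
      rintro rfl
      have hxnq : ¬ x ≤ q := atom_not_le hx hq hxq
      have e1 : q ⊔ x = q ⊔ p := exchange hcov hp (by rwa [sup_comm] at hxle) hxnq
      have e2 : q ⊔ x = q ⊔ r := exchange hcov hr hyle hxnq
      have hrpq : r ≤ p ⊔ q := by
        rw [sup_comm]
        exact (e1 ▸ (e2 ▸ (le_sup_right : r ≤ q ⊔ r)) : r ≤ q ⊔ p)
      have hPle : P ≤ p ⊔ q := sup_le le_rfl hrpq
      have : d P ≤ 2 := (d_mono halg hcov hgenP (gen_sup (gen_atom hp) (gen_atom hq)) hPle).trans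
        (d_two halg hcov hp hq hpq).le
      omega
    set L := x ⊔ y with hL
    have hLP : L ≤ P := sup_le (hxle.trans (le_sup_left)) (hyle.trans (by
      exact sup_le (le_sup_left.trans' le_sup_right) le_sup_right))
    have hgenL : Gen L := gen_sup (gen_atom hx) (gen_atom hy)
    have hdL : d L = 2 := d_two halg hcov hx hy hxy
    set M := p ⊔ r with hM
    have hgenM : Gen M := gen_sup (gen_atom hp) (gen_atom hr)
    -- relative complements
    set phiL := Lᶜ ⊓ P with hphiL
    set phiM := Mᶜ ⊓ P with hphiM
    have hgenphiL : Gen phiL := gen_of_le halg hcov hgenP inf_le_right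
    have hgenphiM : Gen phiM := gen_of_le halg hcov hgenP inf_le_right
    have homL : L ⊔ phiL = P := om hLP
    have homM : M ⊔ phiM = P := om hprP
    have hdphiL : d phiL = 1 := by
      have := d_ortho_add halg hcov hgenL hgenphiL inf_le_left
      rw [homL, hdP3', hdL] at this; omega
    have hdphiM : d phiM = 1 := by
      have := d_ortho_add halg hcov hgenM hgenphiM inf_le_left
      rw [homM, hdP3', hdpr] at this; omega
    set u := phiL ⊔ phiM with hu
    have hgenu : Gen u := gen_sup hgenphiL hgenphiM
    have hdu : d u ≤ 2 := by
      have := d_subadd hgenphiL hgenphiM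
      rw [← hu] at this
      omega
    have huP : u ≤ P := sup_le inf_le_right inf_le_right
    have hunP : u ≠ P := fun h => by
      rw [h] at hdu; omega
    have hphiu : uᶜ ⊓ P ≠ ⊥ := by
      intro h
      have := om huP
      rw [h, sup_bot_eq] at this
      exact hunP this
    obtain ⟨z, hz, hzle⟩ := exists_atom_le halg hphiu
    have hzL : z ≤ L := by
      have h1 : z ≤ phiLᶜ ⊓ P :=
        le_inf ((hzle.trans inf_le_left).trans (anti le_sup_left)) (hzle.trans inf_le_right)
      have h2 : phiLᶜ ⊓ P = L := by
        rw [hphiL, dm_inf, cc, inf_comm, sup_comm]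
        exact om_dual hLP
      rwa [h2] at h1
    have hzM : z ≤ M := by
      have h1 : z ≤ phiMᶜ ⊓ P :=
        le_inf ((hzle.trans inf_le_left).trans (anti le_sup_right)) (hzle.trans inf_le_right)
      have h2 : phiMᶜ ⊓ P = M := by
        rw [hphiM, dm_inf, cc, inf_comm, sup_comm]
        exact om_dual hprP
      rwa [h2] at h1
    -- z is a third atom on p ⊔ r
    have hPnleL : ¬ P ≤ L := by
      intro h
      have := d_mono halg hcov hgenP hgenL h
      omega
    have hqL : q ≤ L → p ≤ L → P ≤ L := by
      intro h1 h2
      -- r ≤ q ⊔ y = q ⊔ r... need r ≤ L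
      have hynq : ¬ y ≤ q := atom_not_le hy hq hyq
      have e2 : q ⊔ y = q ⊔ r := exchange hcov hr hyle hynq
      have hrL : r ≤ L := by
        have : r ≤ q ⊔ y := e2 ▸ le_sup_right
        exact this.trans (sup_le h1 le_sup_right)
      exact sup_le (sup_le h2 h1) hrL
    have hznp : z ≠ p := by
      intro hzp
      have hpLe : p ≤ L := hzp ▸ hzL
      have hxnp : ¬ x ≤ p := atom_not_le hx hp hxp
      have e1 : p ⊔ x = p ⊔ q := exchange hcov hq hxle hxnp
      have hqLe : q ≤ L := by
        have : q ≤ p ⊔ x := e1 ▸ le_sup_right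
        exact this.trans (sup_le hpLe le_sup_left)
      exact hPnleL (hqL hqLe hpLe)
    have hznr : z ≠ r := by
      intro hzr
      have hrLe : r ≤ L := hzr ▸ hzL
      have hynr : ¬ y ≤ r := atom_not_le hy hr hyr
      have e1 : r ⊔ y = r ⊔ q := exchange hcov hq (by rwa [sup_comm] at hyle) hynr
      have hqLe : q ≤ L := by
        have : q ≤ r ⊔ y := e1 ▸ le_sup_right
        exact this.trans (sup_le hrLe le_sup_right)
      have hpLe : p ≤ L := by
        have hxnq : ¬ x ≤ q := atom_not_le hx hq hxq
        have e2 : q ⊔ x = q ⊔ p := exchange hcov hp (by rwa [sup_comm] at hxle) hxnq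
        have : p ≤ q ⊔ x := e2 ▸ le_sup_right
        exact this.trans (sup_le hqLe le_sup_left)
      exact hPnleL (hqL hqLe hpLe)
    exact Or.inr ⟨z, hz, hzM, hznp, hznr⟩

lemma compl_top : (⊤ : α)ᶜ = ⊥ := by
  have := ic (⊤ : α)
  rwa [top_inf_eq] at this

include halg in
lemma commutes_of_atom_split {z : α} (hsplit : ∀ q : α, IsAtom q → q ≤ z ∨ q ≤ zᶜ)
    (y : α) : Commutes y z := by
  unfold Commutes
  apply le_antisymm
  · conv_lhs => rw [← atomistic halg y]
    apply sSup_le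
    rintro a ⟨ha, hay⟩
    rcases hsplit a ha with h | h
    · exact le_trans (le_inf hay h) le_sup_left
    · exact le_trans (le_inf hay h) le_sup_right
  · exact sup_le inf_le_left inf_le_left

lemma commutes_symm {a b : α} (h : Commutes a b) : Commutes b a := by
  unfold Commutes at h ⊢
  set e := ((a ⊓ b) ⊔ (aᶜ ⊓ b))ᶜ ⊓ b with he
  have hd : (a ⊓ b) ⊔ (aᶜ ⊓ b) ≤ b := sup_le inf_le_right inf_le_right
  have h1 : e ≤ (a ⊓ b)ᶜ := le_trans inf_le_left (anti le_sup_left)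
  have h2 : e ≤ (a ⊓ bᶜ)ᶜ := by
    rw [dm_inf, cc]
    exact le_trans inf_le_right le_sup_right
  have h3 : a ≤ eᶜ := by
    conv_lhs => rw [h]
    exact sup_le (lcc h1) (lcc h2)
  have h4 : e ≤ aᶜ := lcc h3
  have h5 : e ≤ (a ⊓ b) ⊔ (aᶜ ⊓ b) := le_trans (le_inf h4 inf_le_right) le_sup_right
  have h6 : e = ⊥ := orth_bot h5 inf_le_left
  have h7 := om hd
  rw [← he, h6, sup_bot_eq] at h7
  rw [inf_comm b a, inf_comm b aᶜ]
  exact h7.symm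

include halg hcov hirr in
lemma all_persp {p q : α} (hp : IsAtom p) (hq : IsAtom q) : Persp p q := by
  set S := {c : α | IsAtom c ∧ Persp p c} with hS
  set z := sSup S with hz
  have horth : ∀ t : α, IsAtom t → ¬ Persp p t → t ≤ zᶜ := by
    intro t ht hnp
    rw [hz, le_compl_sSup]
    rintro y ⟨hy, hpy⟩
    have hty : t ≠ y := by rintro rfl; exact hnp hpy
    have hnyt : ¬ Persp y t := by
      intro hyt
      exact hnp (persp_trans halg hcov hp hy ht hpy hyt)
    exact nonpersp_orth hcov hy ht (Ne.symm hty) hnyt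
  have hsplit : ∀ t : α, IsAtom t → t ≤ z ∨ t ≤ zᶜ := by
    intro t ht
    by_cases hpt : Persp p t
    · exact Or.inl (le_sSup ⟨ht, hpt⟩)
    · exact Or.inr (horth t ht hpt)
  have hcenter : z ∈ CenterSet α := by
    intro y
    exact commutes_symm (commutes_of_atom_split halg hsplit y)
  rw [hirr] at hcenter
  have hzbot : z ≠ ⊥ := by
    intro h
    exact hp.1 (le_bot_iff.mp (h ▸ le_sSup ⟨hp, persp_refl p⟩))
  have hztop : z = ⊤ := by
    rcases hcenter with h | h
    · exact absurd h hzbot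
    · exact h
  by_contra hnpq
  have := horth q hq hnpq
  rw [hztop, compl_top] at this
  exact hq.1 (le_bot_iff.mp this)
lemma compl_ne_bot {x : α} (h : x ≠ ⊤) : xᶜ ≠ ⊥ := by
  intro hc
  apply h
  have := sc x
  rwa [hc, sup_bot_eq] at this

include halg hcov hirr in
lemma top_gen : ∃ s : Finset α, AtomGen s (⊤ : α) := by
  classical
  by_contra hnot
  push_neg at hnot
  have hnottop : ∀ s : Finset α, (∀ b ∈ s, IsAtom b) → s.sup id ≠ ⊤ := by
    intro s hs h
    exact hnot s ⟨hs, h⟩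
  -- the atom-picking function
  have hpick : ∀ s : Finset α, (∀ b ∈ s, IsAtom b) →
      ∃ a : α, IsAtom a ∧ a ≤ (s.sup id)ᶜ := by
    intro s hs
    exact exists_atom_le halg (compl_ne_bot (hnottop s hs))
  set g : Finset α → α := fun s =>
    if h : ∃ a : α, IsAtom a ∧ a ≤ (s.sup id)ᶜ then Classical.choose h else ⊥ with hg
  set t : ℕ → Finset α := fun n => Nat.rec ∅ (fun _ s => insert (g s) s) n with ht
  have ht0 : t 0 = ∅ := rfl
  have htsucc : ∀ n, t (n + 1) = insert (g (t n)) (t n) := fun n => rfl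
  set a : ℕ → α := fun n => g (t n) with ha
  -- invariants
  have hatoms : ∀ n, ∀ b ∈ t n, IsAtom b := by
    intro n
    induction n with
    | zero => intro b hb; simp [ht0] at hb
    | succ n ih =>
      intro b hb
      rw [htsucc] at hb
      rcases Finset.mem_insert.mp hb with rfl | hb
      · have hex := hpick (t n) ih
        have : g (t n) = Classical.choose hex := by rw [hg]; simp [hex]
        rw [this]
        exact (Classical.choose_spec hex).1
      · exact ih b hb
  have haspec : ∀ n, IsAtom (a n) ∧ a n ≤ ((t n).sup id)ᶜ := by
    intro n
    have hex := hpick (t n) (hatoms n)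
    have : a n = Classical.choose hex := by rw [ha, hg]; simp [hex]
    rw [this]
    exact Classical.choose_spec hex
  have htmono : ∀ m n, m ≤ n → t m ⊆ t n := by
    intro m n hmn
    induction n with
    | zero => rw [Nat.le_zero.mp hmn]
    | succ n ih =>
      rcases Nat.le_succ_iff.mp hmn with h | rfl
      · exact (ih h).trans (by rw [htsucc]; exact Finset.subset_insert _ _)
      · rfl
  have htmem : ∀ n b, b ∈ t n ↔ ∃ j < n, b = a j := by
    intro n
    induction n with
    | zero => intro b; simp [ht0]
    | succ n ih =>
      intro b
      rw [htsucc, Finset.mem_insert, ih]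
      constructor
      · rintro (rfl | ⟨j, hj, rfl⟩)
        · exact ⟨n, by omega, rfl⟩
        · exact ⟨j, by omega, rfl⟩
      · rintro ⟨j, hj, rfl⟩
        rcases Nat.lt_succ_iff_lt_or_eq.mp hj with h | rfl
        · exact Or.inr ⟨j, h, rfl⟩
        · exact Or.inl rfl
  set A : ℕ → α := fun n => (t (n + 1)).sup id with hA
  have hA0 : A 0 = a 0 := by
    show (t (0 + 1)).sup id = a 0
    rw [htsucc 0, ht0]
    simp only [Finset.sup_insert, Finset.sup_empty, sup_bot_eq]
    rfl
  have hAsucc : ∀ n, A (n + 1) = a (n + 1) ⊔ A n := by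
    intro n
    rw [hA]
    show (t (n+2)).sup id = a (n+1) ⊔ (t (n+1)).sup id
    rw [htsucc (n+1), Finset.sup_insert]
    rfl
  have haA : ∀ j n, j ≤ n → a j ≤ A n := by
    intro j n hjn
    apply Finset.le_sup (f := id) ((htmem (n+1) (a j)).mpr ⟨j, by omega, rfl⟩)
  have haperp : ∀ n, a (n + 1) ≤ (A n)ᶜ := fun n => (haspec (n + 1)).2
  have hgenA : ∀ n, Gen (A n) := fun n => ⟨t (n + 1), hatoms (n + 1), rfl⟩
  have hdA : ∀ n, d (A n) = n + 1 := by
    intro n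
    induction n with
    | zero => rw [hA0, d_atom (haspec 0).1]
    | succ n ih =>
      rw [hAsucc, sup_comm]
      rw [d_ortho_add halg hcov (hgenA n) (gen_atom (haspec (n+1)).1) (haperp n)]
      simp [ih, d_atom (haspec (n+1)).1]
  have haorth : ∀ m n, m < n → a n ≤ (a m)ᶜ := by
    intro m n hmn
    refine ((haspec n).2).trans (anti ?_)
    rcases Nat.exists_eq_add_of_lt hmn with ⟨k, rfl⟩
    have : a m ≤ A (m + k) := haA m (m + k) (by omega)
    exact this
  have hane : ∀ m n, m < n → a n ≠ a m := by
    intro m n hmn h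
    have := haorth m n hmn
    rw [h] at this
    exact (haspec m).1.1 (orth_bot le_rfl this)
  -- the axis atoms
  have hcex : ∀ n, ∃ cn : α, IsAtom cn ∧ cn ≤ a n ⊔ a (n + 1) ∧ cn ≠ a n ∧ cn ≠ a (n + 1) := by
    intro n
    have := all_persp halg hcov hirr (haspec n).1 (haspec (n+1)).1
    rcases this with h | ⟨cn, h1, h2, h3, h4⟩
    · exact absurd h.symm (hane n (n+1) (by omega))
    · exact ⟨cn, h1, h2, h3, h4⟩
  set c : ℕ → α := fun n => Classical.choose (hcex n) with hc
  have hcspec : ∀ n, IsAtom (c n) ∧ c n ≤ a n ⊔ a (n + 1) ∧ c n ≠ a n ∧ c n ≠ a (n + 1) :=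
    fun n => Classical.choose_spec (hcex n)
  have horthaa : ∀ n, a (n + 1) ≤ (a n)ᶜ := fun n => haorth n (n+1) (by omega)
  have hcna : ∀ n, ¬ c n ≤ (a n)ᶜ := by
    intro n hle
    have : c n ≤ (a n)ᶜ ⊓ (a n ⊔ a (n + 1)) := le_inf hle (hcspec n).2.1
    rw [cancel (horthaa n)] at this
    exact (hcspec n).2.2.2 (atom_le_atom (hcspec n).1 (haspec (n+1)).1 this)
  have hcna' : ∀ n, ¬ c n ≤ (a (n + 1))ᶜ := by
    intro n hle
    have h2 : c n ≤ a (n + 1) ⊔ a n := by rw [sup_comm]; exact (hcspec n).2.1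
    have : c n ≤ (a (n + 1))ᶜ ⊓ (a (n + 1) ⊔ a n) := le_inf hle h2
    rw [cancel (lcc (horthaa n))] at this
    exact (hcspec n).2.2.1 (atom_le_atom (hcspec n).1 (haspec n).1 this)
  have hexch : ∀ n, a n ⊔ c n = a n ⊔ a (n + 1) := by
    intro n
    apply exchange hcov (haspec (n+1)).1 (hcspec n).2.1
    exact atom_not_le (hcspec n).1 (haspec n).1 (hcspec n).2.2.1
  have hexch' : ∀ n, a (n + 1) ≤ a n ⊔ c n := by
    intro n
    rw [hexch n]
    exact le_sup_right
  -- the infinite suprema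
  set tt : α := sSup (Set.range a) with htt
  set w : α := sSup (Set.range c) with hw
  have hwt : w ≤ tt := by
    apply sSup_le
    rintro _ ⟨n, rfl⟩
    exact (hcspec n).2.1.trans (sup_le (le_sSup (Set.mem_range_self n))
      (le_sSup (Set.mem_range_self (n+1))))
  have hta : tt ≤ a 0 ⊔ w := by
    apply sSup_le
    rintro _ ⟨n, rfl⟩
    induction n with
    | zero => exact le_sup_left
    | succ n ih =>
      exact (hexch' n).trans (sup_le ih ((le_sSup (Set.mem_range_self n)).trans le_sup_right))
  have htaw : a 0 ⊔ w = tt :=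
    le_antisymm (sup_le (le_sSup (Set.mem_range_self 0)) hwt) hta
  -- finite joins of axis atoms
  set Ck : ℕ → α := fun k => ((Finset.range (k + 1)).image c).sup id with hCk
  have hCkatoms : ∀ k, ∀ b ∈ (Finset.range (k + 1)).image c, IsAtom b := by
    intro k b hb
    obtain ⟨i, _, rfl⟩ := Finset.mem_image.mp hb
    exact (hcspec i).1
  have hCkle : ∀ i k, i ≤ k → c i ≤ Ck k := by
    intro i k hik
    exact Finset.le_sup (f := id) (Finset.mem_image_of_mem c (Finset.mem_range.mpr (by omega)))
  have hdCk : ∀ k, d (Ck k) ≤ k + 1 := by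
    intro k
    refine (d_le ⟨hCkatoms k, rfl⟩).trans ?_
    exact (Finset.card_image_le).trans (by simp)
  have hgenCk : ∀ k, Gen (Ck k) := fun k => ⟨_, hCkatoms k, rfl⟩
  -- a 0 is not below w
  have ha0w : ¬ a 0 ≤ w := by
    intro hle
    obtain ⟨u, hu, hule⟩ := (CompleteLattice.isCompactElement_iff_exists_le_sSup_of_le_sSup α _).mp (atom_compact halg (haspec 0).1) (Set.range c) hle
    -- extract a bound k
    have : ∃ k, u.sup id ≤ Ck k := by
      clear hule
      induction u using Finset.induction_on with
      | empty => exact ⟨0, by simp⟩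
      | @insert b u' hb ih =>
        have hsb : ↑u' ⊆ Set.range c := (Finset.coe_subset.mpr (Finset.subset_insert b u')).trans hu
        obtain ⟨k', hk'⟩ := ih hsb
        obtain ⟨i, rfl⟩ := hu (Finset.mem_insert_self b u')
        refine ⟨max i k', ?_⟩
        rw [Finset.sup_insert]
        apply sup_le
        · exact hCkle i (max i k') (le_max_left _ _)
        · refine hk'.trans ?_
          apply Finset.sup_mono
          apply Finset.image_subset_image
          intro j hj
          simp only [Finset.mem_range] at hj ⊢
          omega
    obtain ⟨k, hk⟩ := this
    have ha0Ck : a 0 ≤ Ck k := hule.trans hk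
    -- then all a j for j ≤ k+1 are below Ck k
    have hall : ∀ j, j ≤ k + 1 → a j ≤ Ck k := by
      intro j
      induction j with
      | zero => intro _; exact ha0Ck
      | succ j ih =>
        intro hj
        exact (hexch' j).trans (sup_le (ih (by omega)) (hCkle j k (by omega)))
    have hAle : A (k + 1) ≤ Ck k := by
      apply Finset.sup_le
      intro b hb
      obtain ⟨j, hj, rfl⟩ := (htmem (k + 2) b).mp hb
      exact hall j (by omega)
    have := d_mono halg hcov (hgenA (k+1)) (hgenCk k) hAle
    rw [hdA (k+1)] at this
    have := hdCk k
    omega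
  -- w is covered by tt
  have hwlt : w < tt := lt_of_le_of_ne hwt (by
    intro h
    exact ha0w (h ▸ le_sSup (Set.mem_range_self 0)))
  have hcover : w ⋖ tt := by
    rcases hcov (a 0) (haspec 0).1 w with h | h
    · exact absurd h ha0w
    · rwa [sup_comm, htaw] at h
  -- the bad atom b
  set b : α := wᶜ ⊓ tt with hb
  have homb : w ⊔ b = tt := om hwlt.le
  have hbne : b ≠ ⊥ := by
    intro h
    rw [h, sup_bot_eq] at homb
    exact (ne_of_lt hwlt) homb
  have hbatom : IsAtom b := by
    constructor
    · exact hbne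
    · intro b' hb'
      have hb'w : b' ≤ wᶜ := hb'.le.trans inf_le_left
      have h1 : wᶜ ⊓ (w ⊔ b') = b' := cancel hb'w
      rcases hcover.eq_or_eq (le_sup_left : w ≤ w ⊔ b')
          (sup_le hwlt.le (hb'.le.trans inf_le_right)) with h | h
      · rw [h] at h1
        have : b' ≤ w := h1 ▸ inf_le_right
        exact orth_bot this hb'w
      · rw [h] at h1
        rw [← hb] at h1
        exact absurd h1 (Ne.symm (ne_of_lt hb'))
  -- b is below some A m
  have hbAm : ∃ m, b ≤ A m := by
    have hbtt : b ≤ tt := inf_le_right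
    obtain ⟨u, hu, hule⟩ := (CompleteLattice.isCompactElement_iff_exists_le_sSup_of_le_sSup α _).mp (atom_compact halg hbatom) (Set.range a) hbtt
    have : ∃ m, u.sup id ≤ A m := by
      clear hule
      induction u using Finset.induction_on with
      | empty => exact ⟨0, by simp⟩
      | @insert e u' he ih =>
        have hsb : ↑u' ⊆ Set.range a := (Finset.coe_subset.mpr (Finset.subset_insert e u')).trans hu
        obtain ⟨m', hm'⟩ := ih hsb
        obtain ⟨i, rfl⟩ := hu (Finset.mem_insert_self e u')
        refine ⟨max i m', ?_⟩
        rw [Finset.sup_insert]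
        apply sup_le
        · exact haA i (max i m') (le_max_left _ _)
        · refine hm'.trans ?_
          apply Finset.sup_mono
          exact htmono (m' + 1) (max i m' + 1) (by omega)
    obtain ⟨m, hm⟩ := this
    exact ⟨m, hule.trans hm⟩
  have hbc : ∀ n, b ≤ (c n)ᶜ := by
    intro n
    exact (inf_le_left.trans (anti (le_sSup ⟨n, rfl⟩)))
  -- downward induction
  have hdown : ∀ m, b ≤ A (m + 1) → b ≤ A m := by
    intro m hble
    set X : α := A (m + 1) ⊓ (c (m + 1))ᶜ with hX
    have hcAm : c (m + 1) ≤ (A m)ᶜ := by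
      refine (hcspec (m+1)).2.1.trans ?_
      apply sup_le
      · exact haperp m
      · exact (haperp (m+1)).trans (anti (by
          rw [hAsucc]
          exact le_sup_right))
    have hAmX : A m ≤ X := le_inf (by rw [hAsucc]; exact le_sup_right) (lcc hcAm)
    have hXorth : X ≤ (c (m + 1))ᶜ := inf_le_right
    have hXsup : X ⊔ c (m + 1) ≤ A (m + 2) := by
      apply sup_le
      · exact inf_le_left.trans (by rw [hAsucc (m+1)]; exact le_sup_right)
      · refine (hcspec (m+1)).2.1.trans ?_
        rw [hAsucc (m+1)]
        exact sup_le ((haA (m+1) (m+1) le_rfl).trans le_sup_right) le_sup_left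
    have hgenX : Gen X := gen_of_le halg hcov (hgenA (m + 1)) inf_le_left
    have hdX : d X + 1 ≤ m + 3 := by
      have h1 := d_ortho_add halg hcov hgenX (gen_atom (hcspec (m+1)).1) (lcc hXorth)
      rw [d_atom (hcspec (m+1)).1] at h1
      have h2 := d_mono halg hcov (gen_sup hgenX (gen_atom (hcspec (m+1)).1))
        (hgenA (m + 2)) hXsup
      rw [hdA (m+2)] at h2
      omega
    have hdXne : d X ≠ m + 2 := by
      intro h
      have hXA : X = A (m + 1) := eq_of_le_of_d_ge halg hcov hgenX (hgenA (m+1))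
        inf_le_left (by rw [hdA (m+1), h])
      apply hcna (m + 1)
      have hAc : A (m + 1) ≤ (c (m + 1))ᶜ := by
        rw [← hXA]
        exact inf_le_right
      exact lcc (le_trans (haA (m+1) (m+1) le_rfl) hAc)
    have hXeq : A m = X := by
      apply eq_of_le_of_d_ge halg hcov (hgenA m) hgenX hAmX
      rw [hdA m]
      omega
    rw [hXeq]
    exact le_inf hble (hbc (m + 1))
  obtain ⟨m, hm⟩ := hbAm
  have hba0 : b ≤ A 0 := by
    clear hbne homb
    induction m with
    | zero => exact hm
    | succ m ih => exact ih (hdown m hm)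
  have hba : b = a 0 := atom_le_atom hbatom (haspec 0).1 (hA0 ▸ hba0)
  apply hcna 0
  apply lcc
  rw [← hba]
  exact hbc 0

end cov
end OMLProof

/-- a directly irreducible, algebraic, complete OML with the covering
property is modular and has finite height. -/
theorem directlyIrreducible_algebraic_covering_modular_finiteHeight {α : Type*}
    [CompleteOML α]
    (hirr : CenterSet α = {⊥, ⊤})
    (halg : IsAlgebraicLattice α)
    (hcov : ∀ p : α, IsAtom p → ∀ x : α, p ≤ x ∨ x ⋖ x ⊔ p) :
    (∀ x y z : α, x ≤ z → x ⊔ (y ⊓ z) = (x ⊔ y) ⊓ z) ∧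
    ∃ n : ℕ, ∀ C : Set α, IsChain (· ≤ ·) C → C.Finite ∧ C.ncard ≤ n + 1 := by
  classical
  obtain ⟨s, hs⟩ := OMLProof.top_gen halg hcov hirr
  have htopgen : OMLProof.Gen (⊤ : α) := ⟨s, hs⟩
  have hall : ∀ x : α, OMLProof.Gen x :=
    fun x => OMLProof.gen_of_le halg hcov htopgen le_top
  constructor
  · exact fun x y z hxz => OMLProof.modular_law halg hcov hall x y z hxz
  · refine ⟨s.card, ?_⟩
    intro C hC
    have hbound : ∀ tf : Finset α, ↑tf ⊆ C → tf.card ≤ s.card + 1 := by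
      intro tf htf
      obtain ⟨l, hch, hlen, hmem⟩ := OMLProof.chain_sorted tf (hC.mono htf)
      have hb := OMLProof.chain_list_bound halg hcov l s ⊥ hs.1 hch ?_
      · omega
      · intro y hy
        refine ⟨bot_le, ?_⟩
        rw [bot_sup_eq, hs.2]
        exact le_top
    have hfin : C.Finite := by
      by_contra hinf
      obtain ⟨T, hTC, hTfin, hTcard⟩ :=
        Set.Infinite.exists_subset_ncard_eq hinf (s.card + 2)
      have h := hbound hTfin.toFinset (by rw [Set.Finite.coe_toFinset]; exact hTC)
      rw [← Set.ncard_eq_toFinset_card T hTfin] at h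
      omega
    refine ⟨hfin, ?_⟩
    have h := hbound hfin.toFinset (by rw [Set.Finite.coe_toFinset])
    rw [← Set.ncard_eq_toFinset_card C hfin] at h
    exact h
end
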